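/- arXiv:2203.01266 — 5 statements merged into one kernel-verified Lean document; each statement's English description precedes it below -/
import Mathlib

section
/- Let g : ℝ → ℝ be nondecreasing and continuous with g(0) = 0, and let q > 1 and m ≥ 0 satisfy ∫_1^∞ s^{−q−1} (ln s)^m (g(s) − g(−s)) ds < ∞. Let λ be a finite positive measure on a measurable space X, let v : X → ℝ be measurable, and set e(s) = λ({x ∈ X : |v(x)| > s}). Assume there exists C₀ > 0 such that e(s) ≤ C₀ s^{−q} (ln s)^m for all s > e^{2m/q}. Then for every s₀ > e^{2m/q} one has ∫_X g(|v|) dλ ≤ ∫_{{|v| ≤ s₀}} g(|v|) dλ + C₀ q ∫_{s₀}^∞ s^{−q−1} (ln s)^m g(s) ds and ∫_X |g(−|v|)| dλ ≤ ∫_{{|v| ≤ s₀}} |g(−|v|)| dλ − C₀ q ∫_{s₀}^∞ s^{−q−1} (ln s)^m g(−s) ds; in particular g(|v|) and g(−|v|) are λ-integrable. -/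
open MeasureTheory Metric Set

section aux
open Filter Real



lemma phi_deriv (q m : ℝ) (u : ℝ) (hu : 1 < u) :
    HasDerivAt (fun x : ℝ => x ^ (-q) * Real.log x ^ m)
      ((-q * u ^ (-q - 1)) * Real.log u ^ m + u ^ (-q) * (u⁻¹ * m * Real.log u ^ (m - 1))) u := by
  have hu0 : u ≠ 0 := by positivity
  have hlog : Real.log u ≠ 0 := ne_of_gt (Real.log_pos hu)
  exact (Real.hasDerivAt_rpow_const (Or.inl hu0)).mul
    ((Real.hasDerivAt_log hu0).rpow_const (Or.inl hlog))

lemma phi_deriv_cont (q m : ℝ) {A : Set ℝ} (hA : ∀ x ∈ A, 1 < x) :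
    ContinuousOn (fun u : ℝ =>
      (-q * u ^ (-q - 1)) * Real.log u ^ m + u ^ (-q) * (u⁻¹ * m * Real.log u ^ (m - 1))) A := by
  intro x hx
  have hx1 := hA x hx
  have hx0 : x ≠ 0 := by have := hx1; positivity
  have hlog : Real.log x ≠ 0 := ne_of_gt (Real.log_pos hx1)
  have c1 : ContinuousAt (fun u : ℝ => u ^ (-q - 1)) x :=
    Real.continuousAt_rpow_const x _ (Or.inl hx0)
  have c2 : ContinuousAt (fun u : ℝ => u ^ (-q)) x :=
    Real.continuousAt_rpow_const x _ (Or.inl hx0)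
  have c3 : ContinuousAt (fun u : ℝ => Real.log u ^ m) x :=
    (Real.continuousAt_log hx0).rpow_const (Or.inl hlog)
  have c4 : ContinuousAt (fun u : ℝ => Real.log u ^ (m - 1)) x :=
    (Real.continuousAt_log hx0).rpow_const (Or.inl hlog)
  have c5 : ContinuousAt (fun u : ℝ => u⁻¹) x := continuousAt_inv₀ hx0
  exact (((continuousAt_const.mul c1).mul c3).add
    (c2.mul ((c5.mul continuousAt_const).mul c4))).continuousWithinAt

lemma Q_cont (q m : ℝ) {A : Set ℝ} (hA : ∀ x ∈ A, 1 < x) :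
    ContinuousOn (fun u : ℝ => q * u ^ (-q - 1) * Real.log u ^ m) A := by
  intro x hx
  have hx1 := hA x hx
  have hx0 : x ≠ 0 := by have := hx1; positivity
  have hlog : Real.log x ≠ 0 := ne_of_gt (Real.log_pos hx1)
  exact ((continuousAt_const.mul (Real.continuousAt_rpow_const x _ (Or.inl hx0))).mul
    ((Real.continuousAt_log hx0).rpow_const (Or.inl hlog))).continuousWithinAt

lemma phi_tail (q m : ℝ) (hq : 0 < q) (hm : 0 ≤ m) (s : ℝ) (hs : 1 < s) :
    ENNReal.ofReal (s ^ (-q) * Real.log s ^ m)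
      ≤ ∫⁻ u in Ioi s, ENNReal.ofReal (q * u ^ (-q - 1) * Real.log u ^ m) := by
  set φ : ℝ → ℝ := fun x => x ^ (-q) * Real.log x ^ m with hφ
  set φ' : ℝ → ℝ := fun u =>
      (-q * u ^ (-q - 1)) * Real.log u ^ m + u ^ (-q) * (u⁻¹ * m * Real.log u ^ (m - 1)) with hφ'
  set Q : ℝ → ℝ := fun u => q * u ^ (-q - 1) * Real.log u ^ m with hQ
  have key : ∀ T, s ≤ T → ENNReal.ofReal (φ s - φ T)
      ≤ ∫⁻ u in Ioi s, ENNReal.ofReal (Q u) := by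
    intro T hT
    have hico : uIcc s T = Icc s T := uIcc_of_le hT
    have hsub : ∀ x ∈ uIcc s T, 1 < x := by
      rw [hico]; exact fun x hx => lt_of_lt_of_le hs hx.1
    have hftc : ∫ u in s..T, φ' u = φ T - φ s :=
      intervalIntegral.integral_eq_sub_of_hasDerivAt
        (fun x hx => phi_deriv q m x (hsub x hx))
        ((phi_deriv_cont q m hsub).intervalIntegrable)
    have hQint : IntervalIntegrable Q volume s T := (Q_cont q m hsub).intervalIntegrable
    have hmono : ∫ u in s..T, (-φ' u) ≤ ∫ u in s..T, Q u := by
      refine intervalIntegral.integral_mono_on hT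
        (((phi_deriv_cont q m hsub).intervalIntegrable).neg) hQint (fun x hx => ?_)
      have hx1 : 1 < x := lt_of_lt_of_le hs hx.1
      have hb : 0 ≤ x ^ (-q) * (x⁻¹ * m * Real.log x ^ (m - 1)) := by
        have h1 : (0:ℝ) ≤ x ^ (-q) := Real.rpow_nonneg (by linarith) _
        have h2 : (0:ℝ) ≤ x⁻¹ := by positivity
        have h3 : (0:ℝ) ≤ Real.log x ^ (m - 1) := Real.rpow_nonneg (Real.log_nonneg hx1.le) _
        positivity
      simp only [hφ', hQ, neg_add, neg_mul, neg_neg]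
      nlinarith
    have h1 : φ s - φ T = ∫ u in s..T, (-φ' u) := by
      rw [intervalIntegral.integral_neg, hftc]; ring
    have h2 : ∫ u in s..T, Q u = ∫ u in Ioc s T, Q u := intervalIntegral.integral_of_le hT
    have h3 : ENNReal.ofReal (∫ u in Ioc s T, Q u)
        = ∫⁻ u in Ioc s T, ENNReal.ofReal (Q u) := by
      refine ofReal_integral_eq_lintegral_ofReal ?_ ?_
      · have : IntegrableOn Q (Icc s T) := (Q_cont q m (by rw [← hico]; exact hsub)).integrableOn_compact isCompact_Icc
        exact this.mono_set Ioc_subset_Icc_self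
      · refine (ae_restrict_iff' measurableSet_Ioc).2 (ae_of_all _ fun u hu => ?_)
        have hu1 : 1 < u := lt_trans hs hu.1
        have : (0:ℝ) ≤ u ^ (-q-1) := Real.rpow_nonneg (by linarith) _
        have : (0:ℝ) ≤ Real.log u ^ m := Real.rpow_nonneg (Real.log_nonneg hu1.le) _
        positivity
    calc ENNReal.ofReal (φ s - φ T) ≤ ENNReal.ofReal (∫ u in Ioc s T, Q u) := by
          exact ENNReal.ofReal_le_ofReal (by rw [h1, ← h2]; exact hmono)
      _ = ∫⁻ u in Ioc s T, ENNReal.ofReal (Q u) := h3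
      _ ≤ ∫⁻ u in Ioi s, ENNReal.ofReal (Q u) :=
          lintegral_mono' (Measure.restrict_mono Ioc_subset_Ioi_self le_rfl) le_rfl
  have hlim : Tendsto (fun T => ENNReal.ofReal (φ s - φ T)) atTop
      (nhds (ENNReal.ofReal (φ s))) := by
    have h0 : Tendsto φ atTop (nhds 0) := by
      have h := (isLittleO_log_rpow_rpow_atTop (s := q) m hq).tendsto_div_nhds_zero
      refine h.congr' ?_
      filter_upwards [eventually_gt_atTop 0] with T hT
      rw [div_eq_mul_inv, ← Real.rpow_neg hT.le, mul_comm]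
    have : Tendsto (fun T => φ s - φ T) atTop (nhds (φ s - 0)) :=
      tendsto_const_nhds.sub h0
    rw [sub_zero] at this
    exact (ENNReal.continuous_ofReal.tendsto _).comp this
  exact le_of_tendsto hlim (by filter_upwards [eventually_ge_atTop s] with T hT using key T hT)

lemma key_tail (ν : Measure ℝ) [IsFiniteMeasure ν] (h : ℝ → ℝ)
    (hmono : Monotone h) (hcont : Continuous h)
    (q m C₀ s₀ : ℝ) (hq : 0 < q) (hm : 0 ≤ m) (hC₀ : 0 < C₀) (hs₀ : 1 < s₀)
    (hh0 : 0 ≤ h s₀)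
    (tail : ∀ s, s₀ ≤ s → (ν (Ioi s)).toReal ≤ C₀ * s ^ (-q) * Real.log s ^ m)
    (hint : IntegrableOn (fun u => u ^ (-q - 1) * Real.log u ^ m * h u) (Ioi s₀)) :
    ∫⁻ t in Ioi s₀, ENNReal.ofReal (h t) ∂ν
      ≤ ENNReal.ofReal (C₀ * q * ∫ u in Ioi s₀, u ^ (-q - 1) * Real.log u ^ m * h u) := by
  classical
  set S : StieltjesFunction ℝ :=
    { toFun := h, mono' := hmono,
      right_continuous' := fun x => hcont.continuousAt.continuousWithinAt } with hS
  set ρ := S.measure with hρ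
  set w : ℝ → ENNReal := fun u => ENNReal.ofReal (q * u ^ (-q - 1) * Real.log u ^ m) with hw
  have hwmeas : Measurable w := by
    refine ENNReal.measurable_ofReal.comp ?_
    exact (measurable_const.mul (measurable_id.pow_const _)).mul
      (Real.measurable_log.pow_const _)
  have hmeas_rho : Measurable fun u => ρ (Ioc s₀ u) := by
    have : Monotone fun u => ρ (Ioc s₀ u) := fun a b hab =>
      measure_mono (Ioc_subset_Ioc_right hab)
    exact this.measurable
  set η : Measure ℝ := (volume.restrict (Ioi s₀)).withDensity w with hη
  have hA : MeasurableSet {p : ℝ × ℝ | p.1 ≤ p.2} := measurableSet_le measurable_fst measurable_snd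
  -- nonnegativity facts
  have hnn : ∀ u, s₀ ≤ u → 0 ≤ h u := fun u hu => le_trans hh0 (hmono hu)
  have hwnn : ∀ u : ℝ, s₀ < u → (0:ℝ) ≤ q * u ^ (-q - 1) * Real.log u ^ m := by
    intro u hu
    have h1 : (0:ℝ) ≤ u ^ (-q-1) := Real.rpow_nonneg (by linarith) _
    have h2 : (0:ℝ) ≤ Real.log u ^ m := Real.rpow_nonneg (Real.log_nonneg (by linarith)) _
    positivity
  -- measure Ioc formula
  have hIoc : ∀ u, ρ (Ioc s₀ u) = ENNReal.ofReal (h u - h s₀) := fun u =>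
    S.measure_Ioc s₀ u
  -- Step C : tail bound for Ici
  have tailC : ∀ s, s₀ < s → ν (Ici s) ≤ ENNReal.ofReal (C₀ * s ^ (-q) * Real.log s ^ m) := by
    intro s hs
    have hcontφ : ContinuousAt (fun u : ℝ => C₀ * u ^ (-q) * Real.log u ^ m) s := by
      have hs0 : s ≠ 0 := by have : 1 < s := lt_trans hs₀ hs; positivity
      have hlog : Real.log s ≠ 0 := ne_of_gt (Real.log_pos (lt_trans hs₀ hs))
      exact (continuousAt_const.mul (Real.continuousAt_rpow_const s _ (Or.inl hs0))).mul
        ((Real.continuousAt_log hs0).rpow_const (Or.inl hlog))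
    have hev : ∀ᶠ u in nhdsWithin s (Iio s),
        ν (Ici s) ≤ ENNReal.ofReal (C₀ * u ^ (-q) * Real.log u ^ m) := by
      filter_upwards [Ico_mem_nhdsLT_of_mem (⟨hs, le_refl s⟩ : s ∈ Ioc s₀ s)] with u hu
      have h1 : ν (Ici s) ≤ ν (Ioi u) := measure_mono fun x hx => lt_of_lt_of_le hu.2 hx
      refine h1.trans ?_
      have h2 : (0:ℝ) ≤ C₀ * u ^ (-q) * Real.log u ^ m := by
        have h3 : (0:ℝ) ≤ u ^ (-q) := Real.rpow_nonneg (by linarith [hu.1]) _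
        have h4 : (0:ℝ) ≤ Real.log u ^ m := Real.rpow_nonneg (Real.log_nonneg (by linarith [hu.1])) _
        positivity
      exact (ENNReal.le_ofReal_iff_toReal_le (measure_ne_top ν _) h2).2 (tail u hu.1)
    have hlim : Tendsto (fun u => ENNReal.ofReal (C₀ * u ^ (-q) * Real.log u ^ m))
        (nhdsWithin s (Iio s)) (nhds (ENNReal.ofReal (C₀ * s ^ (-q) * Real.log s ^ m))) :=
      ((ENNReal.continuous_ofReal.tendsto _).comp hcontφ.tendsto).mono_left nhdsWithin_le_nhds
    exact ge_of_tendsto hlim hev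
  -- combine with phi_tail
  have tailD : ∀ s, s₀ < s → ν (Ici s) ≤ ENNReal.ofReal C₀ * η (Ici s) := by
    intro s hs
    refine (tailC s hs).trans ?_
    have e1 : ENNReal.ofReal (C₀ * s ^ (-q) * Real.log s ^ m)
        = ENNReal.ofReal C₀ * ENNReal.ofReal (s ^ (-q) * Real.log s ^ m) := by
      rw [← ENNReal.ofReal_mul hC₀.le, mul_assoc]
    rw [e1]
    refine mul_le_mul_right ((phi_tail q m hq hm s (lt_trans hs₀ hs)).trans ?_) _
    -- ∫⁻ u in Ioi s, w u ≤ η (Ici s)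
    rw [hη, withDensity_apply _ measurableSet_Ici, Measure.restrict_restrict measurableSet_Ici]
    have : Ici s ∩ Ioi s₀ = Ici s := inter_eq_left.2 fun x hx => lt_of_lt_of_le hs hx
    rw [this]
    exact lintegral_mono' (Measure.restrict_mono Ioi_subset_Ici_self le_rfl) le_rfl
  have hφη : ∀ s, s₀ ≤ s → ENNReal.ofReal (C₀ * s ^ (-q) * Real.log s ^ m)
      ≤ ENNReal.ofReal C₀ * η (Ici s) := by
    intro s hs
    have e1 : ENNReal.ofReal (C₀ * s ^ (-q) * Real.log s ^ m)
        = ENNReal.ofReal C₀ * ENNReal.ofReal (s ^ (-q) * Real.log s ^ m) := by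
      rw [← ENNReal.ofReal_mul hC₀.le, mul_assoc]
    rw [e1]
    refine mul_le_mul_right ((phi_tail q m hq hm s (lt_of_lt_of_le hs₀ hs)).trans ?_) _
    rw [hη, withDensity_apply _ measurableSet_Ici, Measure.restrict_restrict measurableSet_Ici]
    exact lintegral_mono' (Measure.restrict_mono
      (subset_inter Ioi_subset_Ici_self (Ioi_subset_Ioi hs)) le_rfl) le_rfl
  have tailD : ∀ s, s₀ < s → ν (Ici s) ≤ ENNReal.ofReal C₀ * η (Ici s) :=
    fun s hs => (tailC s hs).trans (hφη s hs.le)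
  have hstart : ν (Ioi s₀) ≤ ENNReal.ofReal C₀ * η (Ici s₀) := by
    refine le_trans ?_ (hφη s₀ le_rfl)
    have h2 : (0:ℝ) ≤ C₀ * s₀ ^ (-q) * Real.log s₀ ^ m := by
      have h3 : (0:ℝ) ≤ s₀ ^ (-q) := Real.rpow_nonneg (by linarith) _
      have h4 : (0:ℝ) ≤ Real.log s₀ ^ m := Real.rpow_nonneg (Real.log_nonneg hs₀.le) _
      positivity
    exact (ENNReal.le_ofReal_iff_toReal_le (measure_ne_top ν _) h2).2 (tail s₀ le_rfl)
  -- pointwise decomposition of h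
  have hpt : ∀ t, t ∈ Ioi s₀ → ENNReal.ofReal (h t)
      = ENNReal.ofReal (h s₀) + ρ (Ioc s₀ t) := by
    intro t ht
    rw [hIoc, ← ENNReal.ofReal_add hh0 (sub_nonneg.2 (hmono (le_of_lt ht))),
      add_sub_cancel]
  have step1 : ∫⁻ t in Ioi s₀, ENNReal.ofReal (h t) ∂ν
      = ENNReal.ofReal (h s₀) * ν (Ioi s₀) + ∫⁻ t in Ioi s₀, ρ (Ioc s₀ t) ∂ν := by
    rw [setLIntegral_congr_fun measurableSet_Ioi hpt,
      lintegral_add_left measurable_const, setLIntegral_const]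
  -- Fubini 1
  have F1 : ∫⁻ t in Ioi s₀, ρ (Ioc s₀ t) ∂ν = ∫⁻ s in Ioi s₀, ν (Ici s) ∂ρ := by
    have e1 := Measure.prod_apply_symm (μ := ρ.restrict (Ioi s₀)) (ν := ν.restrict (Ioi s₀)) hA
    have e2 := Measure.prod_apply (μ := ρ.restrict (Ioi s₀)) (ν := ν.restrict (Ioi s₀)) hA
    have e1' : ∫⁻ t in Ioi s₀, ρ (Ioc s₀ t) ∂ν
        = ∫⁻ y, (ρ.restrict (Ioi s₀)) ((fun x => (x, y)) ⁻¹' {p : ℝ × ℝ | p.1 ≤ p.2})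
            ∂(ν.restrict (Ioi s₀)) := by
      refine lintegral_congr fun y => ?_
      have : ((fun x => (x, y)) ⁻¹' {p : ℝ × ℝ | p.1 ≤ p.2}) = Iic y := rfl
      rw [this, Measure.restrict_apply measurableSet_Iic, inter_comm, Ioi_inter_Iic]
    have e2' : ∫⁻ x, (ν.restrict (Ioi s₀)) (Prod.mk x ⁻¹' {p : ℝ × ℝ | p.1 ≤ p.2})
          ∂(ρ.restrict (Ioi s₀)) = ∫⁻ s in Ioi s₀, ν (Ici s) ∂ρ := by
      refine setLIntegral_congr_fun measurableSet_Ioi (fun x hx => ?_)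
      have h1 : (Prod.mk x ⁻¹' {p : ℝ × ℝ | p.1 ≤ p.2}) = Ici x := rfl
      have h2 : Ici x ∩ Ioi s₀ = Ici x :=
        inter_eq_left.2 (fun y hy => mem_Ioi.2 (lt_of_lt_of_le hx hy))
      rw [h1, Measure.restrict_apply measurableSet_Ici, h2]
    rw [e1', ← e1, e2, e2']
  -- Fubini 2
  have F2 : ∫⁻ s in Ioi s₀, η (Ici s) ∂ρ = ∫⁻ u in Ioi s₀, w u * ρ (Ioc s₀ u) := by
    have e1 := Measure.prod_apply_symm (μ := ρ.restrict (Ioi s₀)) (ν := η) hA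
    have e2 := Measure.prod_apply (μ := ρ.restrict (Ioi s₀)) (ν := η) hA
    have e2' : ∫⁻ x, η (Prod.mk x ⁻¹' {p : ℝ × ℝ | p.1 ≤ p.2}) ∂(ρ.restrict (Ioi s₀))
        = ∫⁻ s in Ioi s₀, η (Ici s) ∂ρ := lintegral_congr fun x => rfl
    have e1' : ∫⁻ y, (ρ.restrict (Ioi s₀)) ((fun x => (x, y)) ⁻¹' {p : ℝ × ℝ | p.1 ≤ p.2}) ∂η
        = ∫⁻ u, ρ (Ioc s₀ u) ∂η := by
      refine lintegral_congr fun y => ?_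
      have : ((fun x => (x, y)) ⁻¹' {p : ℝ × ℝ | p.1 ≤ p.2}) = Iic y := rfl
      rw [this, Measure.restrict_apply measurableSet_Iic, inter_comm, Ioi_inter_Iic]
    have e3 : ∫⁻ u, ρ (Ioc s₀ u) ∂η = ∫⁻ u in Ioi s₀, w u * ρ (Ioc s₀ u) := by
      rw [hη, lintegral_withDensity_eq_lintegral_mul _ hwmeas hmeas_rho]
      rfl
    rw [← e2', ← e2, e1, e1', e3]
  have hηIci : η (Ici s₀) = ∫⁻ u in Ioi s₀, w u := by
    have h2 : Ici s₀ ∩ Ioi s₀ = Ioi s₀ := inter_eq_right.2 Ioi_subset_Ici_self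
    rw [hη, withDensity_apply _ measurableSet_Ici, Measure.restrict_restrict measurableSet_Ici, h2]
  -- assemble
  have hintq : IntegrableOn (fun u => q * (u ^ (-q - 1) * Real.log u ^ m * h u)) (Ioi s₀) :=
    hint.const_mul q
  calc ∫⁻ t in Ioi s₀, ENNReal.ofReal (h t) ∂ν
      = ENNReal.ofReal (h s₀) * ν (Ioi s₀) + ∫⁻ s in Ioi s₀, ν (Ici s) ∂ρ := by
        rw [step1, F1]
    _ ≤ ENNReal.ofReal (h s₀) * (ENNReal.ofReal C₀ * η (Ici s₀))
        + ∫⁻ s in Ioi s₀, ENNReal.ofReal C₀ * η (Ici s) ∂ρ := by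
        refine add_le_add (mul_le_mul_right hstart _) (lintegral_mono_ae ?_)
        exact (ae_restrict_iff' measurableSet_Ioi).2 (ae_of_all _ fun s hs => tailD s hs)
    _ = ENNReal.ofReal C₀ * (ENNReal.ofReal (h s₀) * η (Ici s₀)
        + ∫⁻ s in Ioi s₀, η (Ici s) ∂ρ) := by
        rw [lintegral_const_mul' _ _ ENNReal.ofReal_ne_top]; ring
    _ = ENNReal.ofReal C₀ * ((∫⁻ u in Ioi s₀, ENNReal.ofReal (h s₀) * w u)
        + ∫⁻ u in Ioi s₀, w u * ρ (Ioc s₀ u)) := by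
        rw [F2, hηIci, ← lintegral_const_mul' _ _ ENNReal.ofReal_ne_top]
    _ = ENNReal.ofReal C₀ * ∫⁻ u in Ioi s₀,
          (ENNReal.ofReal (h s₀) * w u + w u * ρ (Ioc s₀ u)) := by
        rw [lintegral_add_left (hwmeas.const_mul _)]
    _ = ENNReal.ofReal C₀
        * ∫⁻ u in Ioi s₀, ENNReal.ofReal (q * (u ^ (-q - 1) * Real.log u ^ m * h u)) := by
        congr 1
        refine setLIntegral_congr_fun measurableSet_Ioi (fun u hu => ?_)
        rw [hIoc, hw]
        rw [mul_comm (ENNReal.ofReal (h s₀)), ← mul_add,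
          ← ENNReal.ofReal_add hh0 (sub_nonneg.2 (hmono (le_of_lt hu))), add_sub_cancel,
          ← ENNReal.ofReal_mul (hwnn u hu)]
        ring_nf
    _ = ENNReal.ofReal C₀
        * ENNReal.ofReal (∫ u in Ioi s₀, q * (u ^ (-q - 1) * Real.log u ^ m * h u)) := by
        rw [ofReal_integral_eq_lintegral_ofReal hintq]
        refine (ae_restrict_iff' measurableSet_Ioi).2 (ae_of_all _ fun u hu => ?_)
        have h1 : (0:ℝ) ≤ u ^ (-q-1) := Real.rpow_nonneg (by linarith [hu.out]) _
        have h2 : (0:ℝ) ≤ Real.log u ^ m := Real.rpow_nonneg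
          (Real.log_nonneg (by linarith [hu.out])) _
        have h3 := hnn u (le_of_lt hu)
        positivity
    _ = ENNReal.ofReal (C₀ * q * ∫ u in Ioi s₀, u ^ (-q - 1) * Real.log u ^ m * h u) := by
        rw [integral_const_mul, ← ENNReal.ofReal_mul hC₀.le, mul_assoc]

lemma main_h {X : Type*} [MeasurableSpace X] (μX : Measure X) [IsFiniteMeasure μX]
    (h : ℝ → ℝ) (hmono : Monotone h) (hcont : Continuous h) (h0 : h 0 = 0)
    (q m C₀ : ℝ) (hq : 1 < q) (hm : 0 ≤ m) (hC₀ : 0 < C₀)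
    (v : X → ℝ) (hv : Measurable v)
    (he : ∀ s > Real.exp (2 * m / q),
      (μX {x | s < |v x|}).toReal ≤ C₀ * s ^ (-q) * Real.log s ^ m)
    (hint : IntegrableOn (fun u => u ^ (-q - 1) * Real.log u ^ m * h u) (Ioi (1:ℝ))) :
    Integrable (fun x => h |v x|) μX ∧
    ∀ s₀, Real.exp (2 * m / q) < s₀ →
      (∫ x, h |v x| ∂μX) ≤ (∫ x in {x | |v x| ≤ s₀}, h |v x| ∂μX)
        + C₀ * q * ∫ s in Ioi s₀, s ^ (-q - 1) * Real.log s ^ m * h s := by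
  have hq0 : 0 < q := lt_trans zero_lt_one hq
  have hE1 : (1:ℝ) ≤ Real.exp (2 * m / q) := Real.one_le_exp (by positivity)
  have hvabs : Measurable fun x => |v x| := hv.abs
  have hfmeas : Measurable fun x => h |v x| := hcont.measurable.comp hvabs
  have hfnn : ∀ x, 0 ≤ h |v x| := fun x => h0 ▸ hmono (abs_nonneg (v x))
  set ν : Measure ℝ := Measure.map (fun x => |v x|) μX with hν
  have : IsFiniteMeasure ν := by
    constructor
    rw [hν, Measure.map_apply hvabs MeasurableSet.univ]
    exact measure_lt_top _ _
  have hInn : ∀ s₀ : ℝ, 1 < s₀ →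
      0 ≤ ∫ s in Ioi s₀, s ^ (-q - 1) * Real.log s ^ m * h s := by
    intro s₀ hs₀
    refine setIntegral_nonneg measurableSet_Ioi fun u hu => ?_
    have h1 : (0:ℝ) ≤ u ^ (-q-1) := Real.rpow_nonneg (by linarith [hu.out, hs₀]) _
    have h2 : (0:ℝ) ≤ Real.log u ^ m :=
      Real.rpow_nonneg (Real.log_nonneg (by linarith [hu.out, hs₀])) _
    have h3 : 0 ≤ h u := h0 ▸ hmono (by linarith [hu.out, hs₀] : (0:ℝ) ≤ u)
    positivity
  have core : ∀ s₀, Real.exp (2 * m / q) < s₀ →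
      (∫⁻ x in {x | s₀ < |v x|}, ENNReal.ofReal (h |v x|) ∂μX)
        ≤ ENNReal.ofReal (C₀ * q * ∫ s in Ioi s₀, s ^ (-q - 1) * Real.log s ^ m * h s) := by
    intro s₀ hs₀
    have hs₀1 : 1 < s₀ := lt_of_le_of_lt hE1 hs₀
    have hmap : ∫⁻ t in Ioi s₀, ENNReal.ofReal (h t) ∂ν
        = ∫⁻ x in {x | s₀ < |v x|}, ENNReal.ofReal (h |v x|) ∂μX := by
      rw [hν]
      exact setLIntegral_map measurableSet_Ioi
        (ENNReal.measurable_ofReal.comp hcont.measurable) hvabs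
    rw [← hmap]
    refine key_tail ν h hmono hcont q m C₀ s₀ hq0 hm hC₀ hs₀1
      (h0 ▸ hmono (by linarith : (0:ℝ) ≤ s₀)) (fun s hs => ?_)
      (hint.mono_set (Ioi_subset_Ioi hs₀1.le))
    rw [hν, Measure.map_apply hvabs measurableSet_Ioi]
    exact he s (lt_of_lt_of_le hs₀ hs)
  -- integrability
  have hAmeas : ∀ s₀ : ℝ, MeasurableSet {x | |v x| ≤ s₀} := fun s₀ =>
    hvabs measurableSet_Iic
  have hcompl : ∀ s₀ : ℝ, {x | |v x| ≤ s₀}ᶜ = {x | s₀ < |v x|} := by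
    intro s₀; ext x; simp [not_le]
  have hint_f : Integrable (fun x => h |v x|) μX := by
    set s₁ : ℝ := Real.exp (2 * m / q) + 1 with hs₁
    have hs₁E : Real.exp (2 * m / q) < s₁ := by rw [hs₁]; linarith
    refine ⟨hfmeas.aestronglyMeasurable, ?_⟩
    rw [hasFiniteIntegral_iff_ofReal (ae_of_all _ hfnn)]
    rw [← lintegral_add_compl _ (hAmeas s₁)]
    have hb1 : ∫⁻ x in {x | |v x| ≤ s₁}, ENNReal.ofReal (h |v x|) ∂μX
        ≤ ENNReal.ofReal (h s₁) * μX {x | |v x| ≤ s₁} := by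
      rw [← setLIntegral_const]
      refine lintegral_mono_ae ((ae_restrict_iff' (hAmeas s₁)).2 (ae_of_all _ fun x hx => ?_))
      exact ENNReal.ofReal_le_ofReal (hmono hx.out)
    have hb2 := core s₁ hs₁E
    rw [hcompl s₁]
    exact lt_of_le_of_lt (add_le_add hb1 hb2)
      (ENNReal.add_lt_top.2 ⟨ENNReal.mul_lt_top ENNReal.ofReal_lt_top (measure_lt_top _ _),
        ENNReal.ofReal_lt_top⟩)
  refine ⟨hint_f, fun s₀ hs₀ => ?_⟩
  have hs₀1 : 1 < s₀ := lt_of_le_of_lt hE1 hs₀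
  have hsplit : (∫ x, h |v x| ∂μX) = (∫ x in {x | |v x| ≤ s₀}, h |v x| ∂μX)
      + ∫ x in {x | |v x| ≤ s₀}ᶜ, h |v x| ∂μX :=
    (integral_add_compl (hAmeas s₀) hint_f).symm
  rw [hsplit]
  refine add_le_add_right ?_ _
  have heq : ∫ x in {x | |v x| ≤ s₀}ᶜ, h |v x| ∂μX
      = (∫⁻ x in {x | s₀ < |v x|}, ENNReal.ofReal (h |v x|) ∂μX).toReal := by
    rw [hcompl s₀]
    rw [integral_eq_lintegral_of_nonneg_ae (ae_of_all _ hfnn)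
      (hfmeas.aestronglyMeasurable.restrict)]
  rw [heq]
  calc (∫⁻ x in {x | s₀ < |v x|}, ENNReal.ofReal (h |v x|) ∂μX).toReal
      ≤ (ENNReal.ofReal (C₀ * q * ∫ s in Ioi s₀, s ^ (-q - 1) * Real.log s ^ m * h s)).toReal :=
        ENNReal.toReal_mono ENNReal.ofReal_ne_top (core s₀ hs₀)
    _ = C₀ * q * ∫ s in Ioi s₀, s ^ (-q - 1) * Real.log s ^ m * h s :=
        ENNReal.toReal_ofReal (mul_nonneg (by positivity) (hInn s₀ hs₀1))


end aux

theorem stmt_8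
    {X : Type*} [MeasurableSpace X]
    (μX : Measure X) [IsFiniteMeasure μX]
    (g : ℝ → ℝ) (hg_mono : Monotone g) (hg_cont : Continuous g) (hg0 : g 0 = 0)
    (q m : ℝ) (hq : 1 < q) (hm : 0 ≤ m)
    (hsub : IntegrableOn
      (fun s => s ^ (-q - 1) * Real.log s ^ m * (g s - g (-s))) (Ioi (1 : ℝ)))
    (v : X → ℝ) (hv : Measurable v)
    (C₀ : ℝ) (hC₀ : 0 < C₀)
    (he : ∀ s > Real.exp (2 * m / q),
      (μX {x | s < |v x|}).toReal ≤ C₀ * s ^ (-q) * Real.log s ^ m) :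
    (Integrable (fun x => g |v x|) μX ∧ Integrable (fun x => g (-|v x|)) μX) ∧
    ∀ s₀ > Real.exp (2 * m / q),
      ((∫ x, g |v x| ∂μX) ≤ (∫ x in {x | |v x| ≤ s₀}, g |v x| ∂μX)
          + C₀ * q * ∫ s in Ioi s₀, s ^ (-q - 1) * Real.log s ^ m * g s) ∧
      ((∫ x, |g (-|v x|)| ∂μX) ≤ (∫ x in {x | |v x| ≤ s₀}, |g (-|v x|)| ∂μX)
          - C₀ * q * ∫ s in Ioi s₀, s ^ (-q - 1) * Real.log s ^ m * g (-s)) := by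
  -- nonnegativity helpers
  have hgneg : ∀ t : ℝ, t ≤ 0 → g t ≤ 0 := fun t ht => hg0 ▸ hg_mono ht
  have hgpos : ∀ t : ℝ, 0 ≤ t → 0 ≤ g t := fun t ht => hg0 ▸ hg_mono ht
  set g₂ : ℝ → ℝ := fun s => -g (-s) with hg₂
  have hg₂mono : Monotone g₂ := fun a b hab => neg_le_neg (hg_mono (neg_le_neg hab))
  have hg₂cont : Continuous g₂ := (hg_cont.comp continuous_neg).neg
  have hg₂0 : g₂ 0 = 0 := by simp [hg₂, hg0]
  -- weight measurability and nonnegativity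
  have hwmeas : Measurable fun u : ℝ => u ^ (-q - 1) * Real.log u ^ m :=
    (measurable_id.pow_const _).mul (Real.measurable_log.pow_const _)
  have hwnn : ∀ u : ℝ, 1 < u → 0 ≤ u ^ (-q - 1) * Real.log u ^ m := by
    intro u hu
    have h1 : (0:ℝ) ≤ u ^ (-q-1) := Real.rpow_nonneg (by linarith) _
    have h2 : (0:ℝ) ≤ Real.log u ^ m := Real.rpow_nonneg (Real.log_nonneg hu.le) _
    positivity
  -- integrability of each piece
  have hint_g : IntegrableOn (fun u => u ^ (-q - 1) * Real.log u ^ m * g u) (Ioi (1:ℝ)) := by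
    refine Integrable.mono hsub ((hwmeas.mul hg_cont.measurable).aestronglyMeasurable) ?_
    refine (ae_restrict_iff' measurableSet_Ioi).2 (ae_of_all _ fun u hu => ?_)
    have h1 := hwnn u hu.out
    have h2 := hgpos u (by linarith [hu.out])
    have h3 := hgneg (-u) (by linarith [hu.out])
    rw [Real.norm_eq_abs, Real.norm_eq_abs, abs_of_nonneg (by positivity),
      abs_of_nonneg (by nlinarith)]
    nlinarith
  have hint_g₂ : IntegrableOn (fun u => u ^ (-q - 1) * Real.log u ^ m * g₂ u) (Ioi (1:ℝ)) := by
    refine Integrable.mono hsub ((hwmeas.mul hg₂cont.measurable).aestronglyMeasurable) ?_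
    refine (ae_restrict_iff' measurableSet_Ioi).2 (ae_of_all _ fun u hu => ?_)
    have h1 := hwnn u hu.out
    have h2 := hgpos u (by linarith [hu.out])
    have h3 := hgneg (-u) (by linarith [hu.out])
    rw [Real.norm_eq_abs, Real.norm_eq_abs, abs_of_nonneg (by simp [hg₂]; nlinarith),
      abs_of_nonneg (by nlinarith)]
    simp only [hg₂]
    nlinarith
  obtain ⟨hI1, hB1⟩ := main_h μX g hg_mono hg_cont hg0 q m C₀ hq hm hC₀ v hv he hint_g
  obtain ⟨hI2, hB2⟩ := main_h μX g₂ hg₂mono hg₂cont hg₂0 q m C₀ hq hm hC₀ v hv he hint_g₂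
  have habs : ∀ x, |g (-|v x|)| = g₂ |v x| := fun x =>
    abs_of_nonpos (hgneg _ (neg_nonpos.2 (abs_nonneg _)))
  have hI2' : Integrable (fun x => g (-|v x|)) μX := by
    have := hI2.neg
    refine this.congr (ae_of_all _ fun x => ?_)
    simp [hg₂]
  refine ⟨⟨hI1, hI2'⟩, fun s₀ hs₀ => ⟨hB1 s₀ hs₀, ?_⟩⟩
  have h2 := hB2 s₀ hs₀
  have hneg : ∫ s in Ioi s₀, s ^ (-q - 1) * Real.log s ^ m * g₂ s
      = -∫ s in Ioi s₀, s ^ (-q - 1) * Real.log s ^ m * g (-s) := by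
    rw [← integral_neg]
    exact setIntegral_congr_fun measurableSet_Ioi fun u hu => by simp [hg₂, mul_neg]
  simp only [habs]
  rw [hneg] at h2
  linarith
end

section
/- Let R > 0. There exists a constant C = C(R, N, k, μ, p) such that for every finite positive Borel measure ν on ℝ^k with compact support contained in B^k(0, R/2), ∫_{B^k(0,R)} ∫_0^R x₁^{N−k−1−(p+1)α₋} ( ∫_{B^k(0,R)} ( x₁ + |x′−y′| )^{−(N−2α₋−2)} dν(y′) )^p dx₁ dx′ ≤ C ∫_{ℝ^k} ( ∫_0^{8R} ν(B^k(x′,r)) r^{ϑ−k−1} dr )^p dx′. -/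
open scoped ENNReal NNReal
open MeasureTheory Metric Set Filter

private lemma lint_rpow_Ioo {c t : ℝ} (hc : 0 ≤ c) (ht : -1 < t) :
    ∫⁻ x in Ioo (0:ℝ) c, ENNReal.ofReal (x ^ t) = ENNReal.ofReal (c ^ (t + 1) / (t + 1)) := by
  have ht1 : t + 1 ≠ 0 := by linarith
  rcases eq_or_lt_of_le hc with h0 | h0
  · rw [← h0]
    simp [Real.zero_rpow ht1]
  · have hint : IntegrableOn (fun x : ℝ => x ^ t) (Ioo 0 c) := by
      have h1 := intervalIntegral.intervalIntegrable_rpow' (a := 0) (b := c) ht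
      exact ((intervalIntegrable_iff_integrableOn_Ioc_of_le hc).mp h1).mono_set
        Ioo_subset_Ioc_self
    have hnn : 0 ≤ᵐ[volume.restrict (Ioo (0:ℝ) c)] fun x : ℝ => x ^ t := by
      filter_upwards [ae_restrict_mem measurableSet_Ioo] with x hx
      exact Real.rpow_nonneg hx.1.le t
    rw [← ofReal_integral_eq_lintegral_ofReal hint hnn]
    congr 1
    rw [← integral_Ioc_eq_integral_Ioo, ← intervalIntegral.integral_of_le hc,
      integral_rpow (Or.inl ht), Real.zero_rpow ht1]
    ring

private lemma kernelRep {x₁ q : ℝ} (hx : 0 < x₁) (hq : 0 < q) {d : ℝ} (hd : 0 ≤ d) :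
    ∫⁻ s in Ioi d, ENNReal.ofReal (q * (x₁ + s) ^ (-q - 1)) =
      ENNReal.ofReal ((x₁ + d) ^ (-q)) := by
  have hpos : ∀ s : ℝ, d ≤ s → 0 < x₁ + s := fun s hs => by linarith
  have hderiv : ∀ s ∈ Ici d, HasDerivAt (fun s : ℝ => -(x₁ + s) ^ (-q))
      (q * (x₁ + s) ^ (-q - 1)) s := by
    intro s hs
    have h1 : HasDerivAt (fun s : ℝ => x₁ + s) 1 s := by
      simpa using (hasDerivAt_id s).const_add x₁
    have h2 := (Real.hasDerivAt_rpow_const (x := x₁ + s) (p := -q)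
      (Or.inl (hpos s hs).ne')).comp s h1
    have h3 := h2.neg
    exact h3.congr_deriv (by ring)
  have hnn : ∀ s ∈ Ioi d, 0 ≤ q * (x₁ + s) ^ (-q - 1) := fun s hs =>
    mul_nonneg hq.le (Real.rpow_nonneg (hpos s (le_of_lt hs)).le _)
  have htend : Tendsto (fun s : ℝ => -(x₁ + s) ^ (-q)) atTop (nhds 0) := by
    rw [show (0:ℝ) = -0 by ring]
    apply Tendsto.neg
    have h4 : Tendsto (fun s : ℝ => x₁ + s) atTop atTop :=
      tendsto_atTop_add_const_left _ _ tendsto_id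
    exact (tendsto_rpow_neg_atTop hq).comp h4
  have hval := integral_Ioi_of_hasDerivAt_of_nonneg' hderiv hnn htend
  have hint := integrableOn_Ioi_deriv_of_nonneg' hderiv hnn htend
  have hnn' : 0 ≤ᵐ[volume.restrict (Ioi d)] fun s : ℝ => q * (x₁ + s) ^ (-q - 1) := by
    filter_upwards [ae_restrict_mem measurableSet_Ioi] with s hs using hnn s hs
  rw [← ofReal_integral_eq_lintegral_ofReal hint hnn', hval]
  norm_num

private lemma rpow_split {p : ℝ} (hp : 1 < p) {x : ℝ≥0∞} (hx : x ≠ ⊤) :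
    x ^ p = x ^ (p - 1) * x := by
  rcases eq_or_ne x 0 with h | h
  · subst h
    rw [ENNReal.zero_rpow_of_pos (by linarith), ENNReal.zero_rpow_of_pos (by linarith), zero_mul]
  · nth_rewrite 3 [← ENNReal.rpow_one x]
    rw [← ENNReal.rpow_add _ _ h hx]
    norm_num

private lemma three_rpow {p : ℝ} (hp : 0 ≤ p) (u v w : ℝ≥0∞) :
    (u + v + w) ^ p ≤ 3 ^ p * (u ^ p + v ^ p + w ^ p) := by
  set m := u ⊔ v ⊔ w with hm
  have h1 : u + v + w ≤ 3 * m := by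
    have hu : u ≤ m := le_sup_of_le_left le_sup_left
    have hv : v ≤ m := le_sup_of_le_left le_sup_right
    have hw : w ≤ m := le_sup_right
    calc u + v + w ≤ m + m + m := by gcongr
    _ = 3 * m := by ring
  calc (u + v + w) ^ p ≤ (3 * m) ^ p := ENNReal.rpow_le_rpow h1 hp
  _ = 3 ^ p * m ^ p := ENNReal.mul_rpow_of_nonneg _ _ hp
  _ ≤ 3 ^ p * (u ^ p + v ^ p + w ^ p) := by
      refine mul_le_mul_right ?_ _
      have hm3 : m = u ∨ m = v ∨ m = w := by
        rcases le_total (u ⊔ v) w with h2 | h2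
        · right; right; rw [hm, sup_eq_right.mpr h2]
        · rcases le_total u v with h | h
          · right; left; rw [hm, sup_eq_left.mpr h2, sup_eq_right.mpr h]
          · left; rw [hm, sup_eq_left.mpr h2, sup_eq_left.mpr h]
      rcases hm3 with h | h | h <;> rw [h]
      · exact le_add_right (le_add_right le_rfl)
      · exact le_add_right le_add_self
      · exact le_add_self

private lemma pointwise_bound {E : Type*} [MeasurableSpace E] [PseudoMetricSpace E]
    [OpensMeasurableSpace E] (R p q e : ℝ) (hR : 0 < R) (hp : 1 < p) (hq : 0 < q)
    (he : e ≤ 0) (hβ : 0 < q + e + 1) :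
    ∃ C : ℝ, 0 < C ∧ ∀ (ν : Measure E), IsFiniteMeasure ν → ∀ (z x' : E), x' ∈ ball z R →
      (∫⁻ x₁ in Ioo (0:ℝ) R, ENNReal.ofReal (x₁ ^ (p * (q + e + 1) - 1)) *
          (∫⁻ y' in ball z R, ENNReal.ofReal ((x₁ + dist x' y') ^ (-q)) ∂ν) ^ p)
      ≤ ENNReal.ofReal C *
          (∫⁻ s in Ioo (0:ℝ) (8 * R), ν (ball x' s) * ENNReal.ofReal (s ^ e)) ^ p := by
  have hp0 : (0:ℝ) < p := by linarith
  have hp1' : (0:ℝ) ≤ p - 1 := by linarith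
  set β : ℝ := q + e + 1 with hβdef
  have ha : (-1:ℝ) < p * β - 1 := by nlinarith
  set K1 : ℝ≥0∞ := ENNReal.ofReal ((q * 2 ^ (-e)) ^ p) with hK1
  set K2 : ℝ≥0∞ := ENNReal.ofReal (q ^ p) * ENNReal.ofReal (1 / β) with hK2
  set K3 : ℝ≥0∞ := ENNReal.ofReal (((2*R) ^ (-q) * (2 ^ (-e) * (2*R) ^ (-(e+1)))) ^ p) *
      ENNReal.ofReal (R ^ (p * β - 1 + 1) / (p * β - 1 + 1)) with hK3
  set D : ℝ≥0∞ := 3 ^ p * (K1 + K2 + K3) with hD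
  have h3top : (3:ℝ≥0∞) ^ p ≠ ⊤ := ENNReal.rpow_ne_top_of_nonneg hp0.le (by norm_num)
  have hDtop : D ≠ ⊤ := by
    rw [hD, hK1, hK2, hK3]
    refine ENNReal.mul_ne_top h3top ?_
    refine ENNReal.add_ne_top.mpr ⟨ENNReal.add_ne_top.mpr ⟨ENNReal.ofReal_ne_top, ?_⟩, ?_⟩
    · exact ENNReal.mul_ne_top ENNReal.ofReal_ne_top ENNReal.ofReal_ne_top
    · exact ENNReal.mul_ne_top ENNReal.ofReal_ne_top ENNReal.ofReal_ne_top
  have hDpos : 0 < D := by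
    rw [hD]
    refine ENNReal.mul_pos (ENNReal.rpow_pos (by norm_num) (by norm_num)).ne' ?_
    have : 0 < K1 := by
      rw [hK1]
      exact ENNReal.ofReal_pos.mpr (by positivity)
    intro hcon
    rw [add_eq_zero, add_eq_zero] at hcon
    exact this.ne' hcon.1.1
  refine ⟨D.toReal + 1, by positivity, ?_⟩
  intro ν hν z x' hx'
  have hDle : D ≤ ENNReal.ofReal (D.toReal + 1) := by
    conv_lhs => rw [← ENNReal.ofReal_toReal hDtop]
    exact ENNReal.ofReal_le_ofReal (by linarith)
  set ν' : Measure E := ν.restrict (ball z R) with hν'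
  set G : ℝ → ℝ≥0∞ := fun s => ν (ball x' s) with hG
  set G' : ℝ → ℝ≥0∞ := fun s => ν' (ball x' s) with hG'
  set gf : ℝ → ℝ≥0∞ := fun s => ν (ball x' s) * ENNReal.ofReal (s ^ e) with hgf
  set W : ℝ≥0∞ := ∫⁻ s in Ioo (0:ℝ) (8 * R), gf s with hW
  suffices hmain : (∫⁻ x₁ in Ioo (0:ℝ) R, ENNReal.ofReal (x₁ ^ (p * β - 1)) *
      (∫⁻ y' in ball z R, ENNReal.ofReal ((x₁ + dist x' y') ^ (-q)) ∂ν) ^ p) ≤ D * W ^ p by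
    exact hmain.trans (mul_le_mul_left hDle _)
  -- basic facts
  have hGmono : Monotone G := fun s t hst => measure_mono (ball_subset_ball hst)
  have hG'mono : Monotone G' := fun s t hst => measure_mono (ball_subset_ball hst)
  have hGmeas : Measurable G := hGmono.measurable
  have hG'meas : Measurable G' := hG'mono.measurable
  have hgfmeas : Measurable gf :=
    hGmeas.mul ((measurable_id.pow measurable_const).ennreal_ofReal)
  have hG'le : ∀ s, G' s ≤ G s := fun s => Measure.restrict_apply_le _ _
  have hGtop : ∀ s, G s ≠ ⊤ := fun s => (measure_lt_top ν _).ne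
  have hG'top : ∀ s, G' s ≠ ⊤ := fun s => ((hG'le s).trans_lt (measure_lt_top ν _)).ne
  have hball : ball z R ⊆ ball x' (2 * R) := by
    intro y hy
    rw [mem_ball] at hx' hy ⊢
    calc dist y x' ≤ dist y z + dist z x' := dist_triangle y z x'
    _ = dist y z + dist x' z := by rw [dist_comm z x']
    _ < 2 * R := by linarith
  have hνtot : ∀ s, G' s ≤ G (2 * R) := by
    intro s
    calc G' s ≤ ν' univ := measure_mono (subset_univ _)
    _ = ν (ball z R) := by rw [hν', Measure.restrict_apply_univ]
    _ ≤ G (2 * R) := measure_mono hball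
  have hGt : ∀ t : ℝ, 0 < t →
      G t ≤ ENNReal.ofReal (2 ^ (-e) * t ^ (-(e+1))) * ∫⁻ s in Ioo t (2*t), gf s := by
    intro t ht
    have hpt : ∀ s ∈ Ioo t (2*t), G t * ENNReal.ofReal ((2*t) ^ e) ≤ gf s := by
      intro s hs
      have hs0 : 0 < s := ht.trans hs.1
      exact mul_le_mul' (hGmono hs.1.le)
        (ENNReal.ofReal_le_ofReal (Real.rpow_le_rpow_of_nonpos hs0 hs.2.le he))
    have hL : G t * ENNReal.ofReal (2 ^ e * t ^ (e+1)) ≤ ∫⁻ s in Ioo t (2*t), gf s := by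
      have h1 : (∫⁻ _ in Ioo t (2*t), (G t * ENNReal.ofReal ((2*t) ^ e)))
          ≤ ∫⁻ s in Ioo t (2*t), gf s := setLIntegral_mono hgfmeas hpt
      rw [setLIntegral_const, Real.volume_Ioo] at h1
      calc G t * ENNReal.ofReal (2 ^ e * t ^ (e+1))
          = G t * ENNReal.ofReal ((2*t) ^ e) * ENNReal.ofReal (2*t - t) := by
            rw [mul_assoc, ← ENNReal.ofReal_mul (Real.rpow_nonneg (by linarith) e)]
            congr 2
            rw [Real.mul_rpow (by norm_num) ht.le, show 2*t - t = t by ring,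
              Real.rpow_add_one ht.ne' e]
            ring
      _ ≤ _ := h1
    have hposr : (0:ℝ) < 2 ^ e * t ^ (e+1) := by positivity
    have hinv : ENNReal.ofReal (2 ^ e * t ^ (e+1)) * ENNReal.ofReal (2 ^ (-e) * t ^ (-(e+1))) = 1 := by
      rw [← ENNReal.ofReal_mul hposr.le,
        show (2:ℝ) ^ e * t ^ (e+1) * (2 ^ (-e) * t ^ (-(e+1)))
          = (2 ^ e * 2 ^ (-e)) * (t ^ (e+1) * t ^ (-(e+1))) by ring,
        ← Real.rpow_add (by norm_num : (0:ℝ) < 2), ← Real.rpow_add ht,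
        show e + -e = 0 by ring, show (e+1) + -(e+1) = 0 by ring, Real.rpow_zero,
        Real.rpow_zero]
      norm_num
    calc G t = G t * ENNReal.ofReal (2 ^ e * t ^ (e+1)) * ENNReal.ofReal (2 ^ (-e) * t ^ (-(e+1))) := by
          rw [mul_assoc, hinv, mul_one]
      _ ≤ (∫⁻ s in Ioo t (2*t), gf s) * ENNReal.ofReal (2 ^ (-e) * t ^ (-(e+1))) :=
          mul_le_mul_left hL _
      _ = _ := mul_comm _ _
  have hLW : ∀ t : ℝ, 0 < t → 2*t ≤ 8*R → (∫⁻ s in Ioo t (2*t), gf s) ≤ W := by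
    intro t ht h2t
    exact lintegral_mono_set fun s hs => ⟨ht.trans hs.1, hs.2.trans_le h2t⟩
  have hker_meas : ∀ x₁ : ℝ, Measurable fun s : ℝ => ENNReal.ofReal (q * (x₁ + s) ^ (-q-1)) :=
    fun x₁ => (measurable_const.mul
      ((measurable_const.add measurable_id).pow measurable_const)).ennreal_ofReal
  have key : ∀ x₁ : ℝ, 0 < x₁ →
      (∫⁻ y' in ball z R, ENNReal.ofReal ((x₁ + dist x' y') ^ (-q)) ∂ν)
        = ∫⁻ s in Ioi (0:ℝ), ENNReal.ofReal (q * (x₁ + s) ^ (-q-1)) * G' s := by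
    intro x₁ hx0
    have h1 : (∫⁻ y' in ball z R, ENNReal.ofReal ((x₁ + dist x' y') ^ (-q)) ∂ν)
        = ∫⁻ y', (∫⁻ s, (Ioi (dist x' y')).indicator
            (fun s => ENNReal.ofReal (q * (x₁ + s) ^ (-q-1))) s) ∂ν' := by
      refine lintegral_congr fun y' => ?_
      rw [lintegral_indicator measurableSet_Ioi]
      exact (kernelRep hx0 hq dist_nonneg).symm
    rw [h1]
    have hmeas : AEMeasurable (Function.uncurry fun (y' : E) (s : ℝ) =>
        (Ioi (dist x' y')).indicator (fun s => ENNReal.ofReal (q * (x₁ + s) ^ (-q-1))) s)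
        (ν'.prod volume) := by
      have heq : (Function.uncurry fun (y' : E) (s : ℝ) =>
          (Ioi (dist x' y')).indicator (fun s => ENNReal.ofReal (q * (x₁ + s) ^ (-q-1))) s)
          = fun w : E × ℝ => {w : E × ℝ | dist x' w.1 < w.2}.indicator
              (fun w => ENNReal.ofReal (q * (x₁ + w.2) ^ (-q-1))) w := by
        funext w
        simp only [Function.uncurry, Set.indicator_apply, mem_Ioi, mem_setOf_eq]
      rw [heq]
      refine Measurable.aemeasurable (Measurable.indicator ?_ ?_)
      · exact (hker_meas x₁).comp measurable_snd
      · exact measurableSet_lt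
          ((continuous_const.dist continuous_fst).measurable) measurable_snd
    rw [lintegral_lintegral_swap hmeas]
    have h2 : ∀ s : ℝ, (∫⁻ y', (Ioi (dist x' y')).indicator
        (fun s => ENNReal.ofReal (q * (x₁ + s) ^ (-q-1))) s ∂ν')
        = ENNReal.ofReal (q * (x₁ + s) ^ (-q-1)) * G' s := by
      intro s
      have h3 : ∀ y' : E, (Ioi (dist x' y')).indicator
          (fun s => ENNReal.ofReal (q * (x₁ + s) ^ (-q-1))) s
          = (ball x' s).indicator (fun _ => ENNReal.ofReal (q * (x₁ + s) ^ (-q-1))) y' := by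
        intro y'
        by_cases hmem : dist x' y' < s
        · exact (Set.indicator_of_mem (mem_Ioi.mpr hmem) _).trans
            (Set.indicator_of_mem (mem_ball'.mpr hmem)
              (fun _ => ENNReal.ofReal (q * (x₁ + s) ^ (-q-1)))).symm
        · exact (Set.indicator_of_notMem (by simpa using hmem) _).trans
            (Set.indicator_of_notMem (fun h => hmem (mem_ball'.mp h))
              (fun _ => ENNReal.ofReal (q * (x₁ + s) ^ (-q-1)))).symm
      rw [lintegral_congr h3, lintegral_indicator_const measurableSet_ball]
    rw [lintegral_congr h2,
      ← lintegral_add_compl (fun s => ENNReal.ofReal (q * (x₁ + s) ^ (-q-1)) * G' s)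
        (measurableSet_Ioi (a := (0:ℝ)))]
    have h4 : ∫⁻ s in (Ioi (0:ℝ))ᶜ, ENNReal.ofReal (q * (x₁ + s) ^ (-q-1)) * G' s = 0 := by
      rw [compl_Ioi]
      have h5 : ∀ᵐ (s : ℝ), s ∈ Iic (0:ℝ) →
          (fun s => ENNReal.ofReal (q * (x₁ + s) ^ (-q-1)) * G' s) s = (fun _ => (0:ℝ≥0∞)) s := by
        refine ae_of_all _ fun s hs => ?_
        have : ball x' s = ∅ := ball_eq_empty.mpr hs
        simp [hG', this]
      rw [setLIntegral_congr_fun_ae measurableSet_Iic h5, lintegral_zero]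
    rw [h4, add_zero]
  set J : ℝ → ℝ≥0∞ := fun x₁ => ∫⁻ s in Ioc x₁ (2*R), G' s * ENNReal.ofReal (s ^ (-q-1))
    with hJ
  set J₂ : ℝ → ℝ≥0∞ := fun x₁ => ∫⁻ s in Ioc x₁ (2*R), gf s * ENNReal.ofReal (s ^ (-β))
    with hJ₂
  have hJanti : Antitone J := fun x y hxy => lintegral_mono_set (Ioc_subset_Ioc_left hxy)
  have hJmeas : Measurable J := hJanti.measurable
  have hIbound : ∀ x₁ ∈ Ioo (0:ℝ) R,
      (∫⁻ y' in ball z R, ENNReal.ofReal ((x₁ + dist x' y') ^ (-q)) ∂ν)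
        ≤ ENNReal.ofReal (q * x₁ ^ (-q)) * G' x₁ + ENNReal.ofReal q * J x₁
          + ENNReal.ofReal ((2*R) ^ (-q)) * G (2*R) := by
    intro x₁ hx₁
    obtain ⟨hx0, hxR⟩ := hx₁
    rw [key x₁ hx0]
    have hsplit1 : Ioi (0:ℝ) = (Ioc 0 x₁ ∪ Ioc x₁ (2*R)) ∪ Ioi (2*R) := by
      rw [Ioc_union_Ioc_eq_Ioc hx0.le (by linarith), Ioc_union_Ioi_eq_Ioi (by linarith)]
    have hdisj2 : Disjoint (Ioc (0:ℝ) x₁) (Ioc x₁ (2*R)) := Ioc_disjoint_Ioc_of_le le_rfl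
    have hdisj1 : Disjoint (Ioc (0:ℝ) x₁ ∪ Ioc x₁ (2*R)) (Ioi (2*R)) := by
      rw [Ioc_union_Ioc_eq_Ioc hx0.le (by linarith)]
      rw [Set.disjoint_left]
      rintro a ⟨_, h1⟩ h2
      rw [mem_Ioi] at h2
      linarith
    rw [hsplit1, lintegral_union measurableSet_Ioi hdisj1,
      lintegral_union measurableSet_Ioc hdisj2]
    have hP1 : (∫⁻ s in Ioc (0:ℝ) x₁, ENNReal.ofReal (q * (x₁ + s) ^ (-q-1)) * G' s)
        ≤ ENNReal.ofReal (q * x₁ ^ (-q)) * G' x₁ := by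
      have hpt : ∀ s ∈ Ioc (0:ℝ) x₁, ENNReal.ofReal (q * (x₁ + s) ^ (-q-1)) * G' s
          ≤ ENNReal.ofReal (q * x₁ ^ (-q-1)) * G' x₁ := by
        intro s hs
        refine mul_le_mul' (ENNReal.ofReal_le_ofReal ?_) (hG'mono hs.2)
        have h6 : (x₁ + s) ^ (-q-1) ≤ x₁ ^ (-q-1) :=
          Real.rpow_le_rpow_of_nonpos hx0 (by linarith [hs.1]) (by linarith)
        exact mul_le_mul_of_nonneg_left h6 hq.le
      calc (∫⁻ s in Ioc (0:ℝ) x₁, ENNReal.ofReal (q * (x₁ + s) ^ (-q-1)) * G' s)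
          ≤ ∫⁻ _ in Ioc (0:ℝ) x₁, (ENNReal.ofReal (q * x₁ ^ (-q-1)) * G' x₁) :=
            setLIntegral_mono measurable_const hpt
        _ = ENNReal.ofReal (q * x₁ ^ (-q-1)) * G' x₁ * ENNReal.ofReal x₁ := by
            rw [setLIntegral_const, Real.volume_Ioc]
            norm_num
        _ = ENNReal.ofReal (q * x₁ ^ (-q)) * G' x₁ := by
            rw [mul_right_comm, ← ENNReal.ofReal_mul (by positivity)]
            congr 2
            rw [show -q = -q-1+1 by ring, Real.rpow_add_one hx0.ne']
            ring
    have hP2 : (∫⁻ s in Ioc x₁ (2*R), ENNReal.ofReal (q * (x₁ + s) ^ (-q-1)) * G' s)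
        ≤ ENNReal.ofReal q * J x₁ := by
      have hpt : ∀ s ∈ Ioc x₁ (2*R), ENNReal.ofReal (q * (x₁ + s) ^ (-q-1)) * G' s
          ≤ ENNReal.ofReal q * (G' s * ENNReal.ofReal (s ^ (-q-1))) := by
        intro s hs
        have hs0 : 0 < s := hx0.trans hs.1
        have h6 : (x₁ + s) ^ (-q-1) ≤ s ^ (-q-1) :=
          Real.rpow_le_rpow_of_nonpos hs0 (by linarith) (by linarith)
        calc ENNReal.ofReal (q * (x₁ + s) ^ (-q-1)) * G' s
            ≤ ENNReal.ofReal (q * s ^ (-q-1)) * G' s :=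
              mul_le_mul_left (ENNReal.ofReal_le_ofReal
                (mul_le_mul_of_nonneg_left h6 hq.le)) _
          _ = ENNReal.ofReal q * (G' s * ENNReal.ofReal (s ^ (-q-1))) := by
              rw [ENNReal.ofReal_mul hq.le]
              ring
      calc (∫⁻ s in Ioc x₁ (2*R), ENNReal.ofReal (q * (x₁ + s) ^ (-q-1)) * G' s)
          ≤ ∫⁻ s in Ioc x₁ (2*R), ENNReal.ofReal q * (G' s * ENNReal.ofReal (s ^ (-q-1))) :=
            setLIntegral_mono (measurable_const.mul (hG'meas.mul
              ((measurable_id.pow measurable_const).ennreal_ofReal))) hpt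
        _ = ENNReal.ofReal q * J x₁ := lintegral_const_mul' _ _ ENNReal.ofReal_ne_top
    have hP3 : (∫⁻ s in Ioi (2*R), ENNReal.ofReal (q * (x₁ + s) ^ (-q-1)) * G' s)
        ≤ ENNReal.ofReal ((2*R) ^ (-q)) * G (2*R) := by
      calc (∫⁻ s in Ioi (2*R), ENNReal.ofReal (q * (x₁ + s) ^ (-q-1)) * G' s)
          ≤ ∫⁻ s in Ioi (2*R), ENNReal.ofReal (q * (x₁ + s) ^ (-q-1)) * G (2*R) :=
            setLIntegral_mono ((hker_meas x₁).mul_const _)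
              (fun s _ => mul_le_mul_right (hνtot s) _)
        _ = (∫⁻ s in Ioi (2*R), ENNReal.ofReal (q * (x₁ + s) ^ (-q-1))) * G (2*R) :=
            lintegral_mul_const' _ _ (hGtop _)
        _ = ENNReal.ofReal ((x₁ + 2*R) ^ (-q)) * G (2*R) := by
            rw [kernelRep hx0 hq (by linarith : (0:ℝ) ≤ 2*R)]
        _ ≤ ENNReal.ofReal ((2*R) ^ (-q)) * G (2*R) := by
            refine mul_le_mul_left (ENNReal.ofReal_le_ofReal ?_) _
            exact Real.rpow_le_rpow_of_nonpos (by linarith) (by linarith) (by linarith)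
    exact add_le_add (add_le_add hP1 hP2) hP3
  rcases eq_top_or_lt_top W with hWtop | hWlt
  · rw [hWtop, ENNReal.top_rpow_of_pos hp0, ENNReal.mul_top hDpos.ne']
    exact le_top
  have hWtop : W ≠ ⊤ := hWlt.ne
  rcases eq_or_ne W 0 with hW0 | hW0
  · -- degenerate case : ν (ball z R) = 0
    have hG2R : G (2*R) = 0 := by
      have h1 : ∀ s ∈ Ioo (2*R) (8*R), G (2*R) * ENNReal.ofReal ((8*R) ^ e) ≤ gf s := by
        intro s hs
        refine mul_le_mul' (hGmono hs.1.le) (ENNReal.ofReal_le_ofReal ?_)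
        exact Real.rpow_le_rpow_of_nonpos (by linarith [hs.1]) hs.2.le he
      have h2 : G (2*R) * ENNReal.ofReal ((8*R) ^ e) * ENNReal.ofReal (8*R - 2*R)
          ≤ ∫⁻ s in Ioo (2*R) (8*R), gf s := by
        have h3 : (∫⁻ _ in Ioo (2*R) (8*R), (G (2*R) * ENNReal.ofReal ((8*R) ^ e)))
            ≤ ∫⁻ s in Ioo (2*R) (8*R), gf s := setLIntegral_mono hgfmeas h1
        rwa [setLIntegral_const, Real.volume_Ioo] at h3
      have h4 : (∫⁻ s in Ioo (2*R) (8*R), gf s) ≤ W :=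
        lintegral_mono_set fun s hs => ⟨by linarith [hs.1], hs.2⟩
      have h5 : G (2*R) * ENNReal.ofReal ((8*R) ^ e) * ENNReal.ofReal (8*R - 2*R) = 0 :=
        le_antisymm (h2.trans (h4.trans_eq hW0)) zero_le
      rcases mul_eq_zero.mp h5 with h6 | h6
      · rcases mul_eq_zero.mp h6 with h7 | h7
        · exact h7
        · exact absurd h7 (ENNReal.ofReal_pos.mpr (by positivity)).ne'
      · exact absurd h6 (ENNReal.ofReal_pos.mpr (by linarith)).ne'
    have hν0 : ν (ball z R) = 0 :=
      le_antisymm ((measure_mono hball).trans hG2R.le) zero_le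
    have hzero : (∫⁻ x₁ in Ioo (0:ℝ) R, ENNReal.ofReal (x₁ ^ (p * β - 1)) *
        (∫⁻ y' in ball z R, ENNReal.ofReal ((x₁ + dist x' y') ^ (-q)) ∂ν) ^ p) = 0 := by
      have h8 : ∀ x₁ : ℝ, ENNReal.ofReal (x₁ ^ (p * β - 1)) *
          (∫⁻ y' in ball z R, ENNReal.ofReal ((x₁ + dist x' y') ^ (-q)) ∂ν) ^ p = 0 := by
        intro x₁
        rw [setLIntegral_measure_zero _ _ hν0, ENNReal.zero_rpow_of_pos hp0, mul_zero]
      rw [lintegral_congr h8, lintegral_zero]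
    rw [hzero]
    exact zero_le
  have hWsplit : W ^ p = W ^ (p-1) * W := rpow_split hp hWtop
  set L : ℝ → ℝ≥0∞ := fun t => ∫⁻ s in Ioo t (2*t), gf s with hLdef
  -- combination of powers for T1
  have hcomb : ∀ x₁ : ℝ, 0 < x₁ → ENNReal.ofReal (x₁ ^ (p * β - 1)) *
      (ENNReal.ofReal (q * x₁ ^ (-q))) ^ p * (ENNReal.ofReal (2 ^ (-e) * x₁ ^ (-(e+1)))) ^ p
      = K1 * ENNReal.ofReal (x₁ ^ (-1:ℝ)) := by
    intro x₁ hx0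
    have h2e : (0:ℝ) < 2 ^ (-e) := by positivity
    have hb1 : (0:ℝ) < x₁ ^ (-q) := Real.rpow_pos_of_pos hx0 _
    have hb2 : (0:ℝ) < x₁ ^ (-(e+1)) := Real.rpow_pos_of_pos hx0 _
    rw [ENNReal.ofReal_rpow_of_pos (by positivity), ENNReal.ofReal_rpow_of_pos (by positivity),
      ← ENNReal.ofReal_mul (Real.rpow_nonneg hx0.le _), ← ENNReal.ofReal_mul (by positivity),
      hK1, ← ENNReal.ofReal_mul (by positivity)]
    congr 1
    rw [Real.mul_rpow hq.le hb1.le, Real.mul_rpow h2e.le hb2.le, Real.mul_rpow hq.le h2e.le,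
      ← Real.rpow_mul hx0.le, ← Real.rpow_mul hx0.le,
      show x₁ ^ (p * β - 1) * (q ^ p * x₁ ^ (-q * p)) * ((2 ^ (-e)) ^ p * x₁ ^ (-(e+1) * p))
        = (q ^ p * (2 ^ (-e)) ^ p) * (x₁ ^ (p * β - 1) * x₁ ^ (-q * p) * x₁ ^ (-(e+1) * p)) by
          ring,
      ← Real.rpow_add hx0, ← Real.rpow_add hx0,
      show p * β - 1 + -q * p + -(e+1) * p = -1 by rw [hβdef]; ring]
  -- core 1 : Tonelli
  have hcore1 : (∫⁻ x₁ in Ioo (0:ℝ) R, ENNReal.ofReal (x₁ ^ (-1:ℝ)) * L x₁) ≤ W := by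
    have hrw : ∀ x₁ ∈ Ioo (0:ℝ) R, ENNReal.ofReal (x₁ ^ (-1:ℝ)) * L x₁
        = ∫⁻ s in Ioo (0:ℝ) (8*R),
            ENNReal.ofReal (x₁ ^ (-1:ℝ)) * (Ioo x₁ (2*x₁)).indicator gf s := by
      intro x₁ hx₁
      rw [lintegral_const_mul' _ _ ENNReal.ofReal_ne_top]
      congr 1
      rw [lintegral_indicator measurableSet_Ioo, Measure.restrict_restrict measurableSet_Ioo,
        inter_eq_self_of_subset_left
          (fun s hs => mem_Ioo.mpr ⟨hx₁.1.trans hs.1, hs.2.trans_le (by linarith [hx₁.2])⟩)]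
    have hmeas1 : AEMeasurable (Function.uncurry fun (x₁ : ℝ) (s : ℝ) =>
        ENNReal.ofReal (x₁ ^ (-1:ℝ)) * (Ioo x₁ (2*x₁)).indicator gf s)
        ((volume.restrict (Ioo (0:ℝ) R)).prod (volume.restrict (Ioo (0:ℝ) (8*R)))) := by
      have heq : (Function.uncurry fun (x₁ : ℝ) (s : ℝ) =>
          ENNReal.ofReal (x₁ ^ (-1:ℝ)) * (Ioo x₁ (2*x₁)).indicator gf s)
          = fun w : ℝ × ℝ => ENNReal.ofReal (w.1 ^ (-1:ℝ)) *
              {w : ℝ × ℝ | w.1 < w.2 ∧ w.2 < 2 * w.1}.indicator (fun w => gf w.2) w := by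
        funext w
        simp only [Function.uncurry, Set.indicator_apply, mem_Ioo, mem_setOf_eq]
      rw [heq]
      refine Measurable.aemeasurable (Measurable.mul ?_ (Measurable.indicator ?_ ?_))
      · exact (measurable_fst.pow measurable_const).ennreal_ofReal
      · exact hgfmeas.comp measurable_snd
      · exact (measurableSet_lt measurable_fst measurable_snd).inter
          (measurableSet_lt measurable_snd (measurable_const.mul measurable_fst))
    calc (∫⁻ x₁ in Ioo (0:ℝ) R, ENNReal.ofReal (x₁ ^ (-1:ℝ)) * L x₁)
        = ∫⁻ x₁ in Ioo (0:ℝ) R, ∫⁻ s in Ioo (0:ℝ) (8*R),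
            ENNReal.ofReal (x₁ ^ (-1:ℝ)) * (Ioo x₁ (2*x₁)).indicator gf s :=
          setLIntegral_congr_fun_ae measurableSet_Ioo (ae_of_all _ hrw)
      _ = ∫⁻ s in Ioo (0:ℝ) (8*R), ∫⁻ x₁ in Ioo (0:ℝ) R,
            ENNReal.ofReal (x₁ ^ (-1:ℝ)) * (Ioo x₁ (2*x₁)).indicator gf s :=
          lintegral_lintegral_swap hmeas1
      _ ≤ ∫⁻ s in Ioo (0:ℝ) (8*R), gf s := by
          refine lintegral_mono_ae (ae_restrict_of_forall_mem measurableSet_Ioo fun s hs => ?_)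
          have hs0 : 0 < s := hs.1
          have hgftop : gf s ≠ ⊤ := ENNReal.mul_ne_top (hGtop s) ENNReal.ofReal_ne_top
          calc (∫⁻ x₁ in Ioo (0:ℝ) R,
                ENNReal.ofReal (x₁ ^ (-1:ℝ)) * (Ioo x₁ (2*x₁)).indicator gf s)
              ≤ ∫⁻ x₁ in Ioo (0:ℝ) R,
                  (Ioo (s/2) s).indicator (fun _ => ENNReal.ofReal (2/s)) x₁ * gf s := by
                refine lintegral_mono fun x₁ => ?_
                by_cases hmem : s ∈ Ioo x₁ (2*x₁)
                · have hm1 : x₁ < s := hmem.1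
                  have hm2 : s < 2*x₁ := hmem.2
                  have hx0 : 0 < x₁ := by linarith
                  rw [Set.indicator_of_mem hmem gf,
                    Set.indicator_of_mem (show x₁ ∈ Ioo (s/2) s from mem_Ioo.mpr
                      ⟨by linarith, hm1⟩) (fun _ => ENNReal.ofReal (2/s))]
                  refine mul_le_mul_left (ENNReal.ofReal_le_ofReal ?_) _
                  rw [Real.rpow_neg_one]
                  calc x₁⁻¹ ≤ (s/2)⁻¹ := by
                        apply inv_anti₀ (by linarith) (by linarith)
                  _ = 2/s := by rw [inv_div]
                · rw [Set.indicator_of_notMem hmem, mul_zero]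
                  exact zero_le
            _ = (∫⁻ x₁ in Ioo (0:ℝ) R,
                  (Ioo (s/2) s).indicator (fun _ => ENNReal.ofReal (2/s)) x₁) * gf s :=
                lintegral_mul_const' _ _ hgftop
            _ ≤ 1 * gf s := by
                refine mul_le_mul_left ?_ _
                rw [lintegral_indicator_const measurableSet_Ioo,
                  Measure.restrict_apply measurableSet_Ioo]
                calc ENNReal.ofReal (2/s) * volume (Ioo (s/2) s ∩ Ioo 0 R)
                    ≤ ENNReal.ofReal (2/s) * volume (Ioo (s/2) s) :=
                      mul_le_mul_right (measure_mono inter_subset_left) _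
                  _ = ENNReal.ofReal (2/s) * ENNReal.ofReal (s - s/2) := by
                      rw [Real.volume_Ioo]
                  _ = ENNReal.ofReal ((2/s) * (s - s/2)) := by
                      rw [← ENNReal.ofReal_mul (by positivity)]
                  _ ≤ 1 := by
                      rw [show (2/s) * (s - s/2) = 1 by field_simp; ring]
                      simp
            _ = gf s := one_mul _
  have hT1 : (∫⁻ x₁ in Ioo (0:ℝ) R, ENNReal.ofReal (x₁ ^ (p * β - 1)) *
      (ENNReal.ofReal (q * x₁ ^ (-q)) * G' x₁) ^ p) ≤ K1 * W ^ p := by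
    have hpt : ∀ x₁ ∈ Ioo (0:ℝ) R, ENNReal.ofReal (x₁ ^ (p * β - 1)) *
        (ENNReal.ofReal (q * x₁ ^ (-q)) * G' x₁) ^ p
        ≤ K1 * W ^ (p-1) * (ENNReal.ofReal (x₁ ^ (-1:ℝ)) * L x₁) := by
      intro x₁ hx₁
      obtain ⟨hx0, hxR⟩ := hx₁
      set c : ℝ≥0∞ := ENNReal.ofReal (2 ^ (-e) * x₁ ^ (-(e+1))) with hc
      have hctop : c ≠ ⊤ := ENNReal.ofReal_ne_top
      have hGb : G' x₁ ≤ c * L x₁ := (hG'le x₁).trans (hGt x₁ hx0)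
      have hGW : G' x₁ ≤ c * W := hGb.trans (mul_le_mul_right (hLW x₁ hx0 (by linarith)) c)
      have h2 : (G' x₁) ^ p ≤ c ^ p * W ^ (p-1) * L x₁ := by
        calc (G' x₁) ^ p = (G' x₁) ^ (p-1) * G' x₁ := rpow_split hp (hG'top x₁)
        _ ≤ (c * W) ^ (p-1) * (c * L x₁) :=
            mul_le_mul' (ENNReal.rpow_le_rpow hGW hp1') hGb
        _ = (c ^ (p-1) * c) * (W ^ (p-1) * L x₁) := by
            rw [ENNReal.mul_rpow_of_nonneg _ _ hp1']
            ring
        _ = c ^ p * (W ^ (p-1) * L x₁) := by rw [← rpow_split hp hctop]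
        _ = c ^ p * W ^ (p-1) * L x₁ := by ring
      calc ENNReal.ofReal (x₁ ^ (p * β - 1)) * (ENNReal.ofReal (q * x₁ ^ (-q)) * G' x₁) ^ p
          = ENNReal.ofReal (x₁ ^ (p * β - 1)) *
              ((ENNReal.ofReal (q * x₁ ^ (-q))) ^ p * (G' x₁) ^ p) := by
            rw [ENNReal.mul_rpow_of_nonneg _ _ hp0.le]
        _ ≤ ENNReal.ofReal (x₁ ^ (p * β - 1)) *
              ((ENNReal.ofReal (q * x₁ ^ (-q))) ^ p * (c ^ p * W ^ (p-1) * L x₁)) := by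
            exact mul_le_mul_right (mul_le_mul_right h2 _) _
        _ = (ENNReal.ofReal (x₁ ^ (p * β - 1)) * (ENNReal.ofReal (q * x₁ ^ (-q))) ^ p * c ^ p)
              * W ^ (p-1) * L x₁ := by ring
        _ = (K1 * ENNReal.ofReal (x₁ ^ (-1:ℝ))) * W ^ (p-1) * L x₁ := by
            rw [hc, hcomb x₁ hx0]
        _ = K1 * W ^ (p-1) * (ENNReal.ofReal (x₁ ^ (-1:ℝ)) * L x₁) := by ring
    calc (∫⁻ x₁ in Ioo (0:ℝ) R, ENNReal.ofReal (x₁ ^ (p * β - 1)) *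
        (ENNReal.ofReal (q * x₁ ^ (-q)) * G' x₁) ^ p)
        ≤ ∫⁻ x₁ in Ioo (0:ℝ) R, K1 * W ^ (p-1) * (ENNReal.ofReal (x₁ ^ (-1:ℝ)) * L x₁) :=
          lintegral_mono_ae (ae_restrict_of_forall_mem measurableSet_Ioo hpt)
      _ = K1 * W ^ (p-1) * ∫⁻ x₁ in Ioo (0:ℝ) R, ENNReal.ofReal (x₁ ^ (-1:ℝ)) * L x₁ :=
          lintegral_const_mul' _ _ (ENNReal.mul_ne_top ENNReal.ofReal_ne_top
            (ENNReal.rpow_ne_top_of_nonneg hp1' hWtop))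
      _ ≤ K1 * W ^ (p-1) * W := mul_le_mul_right hcore1 _
      _ = K1 * W ^ p := by rw [hWsplit, mul_assoc]
  have hβ1 : (-1:ℝ) < β - 1 := by linarith
  have hcore2 : (∫⁻ x₁ in Ioo (0:ℝ) R, ENNReal.ofReal (x₁ ^ (β-1)) * J₂ x₁)
      ≤ ENNReal.ofReal (1/β) * W := by
    have hrw : ∀ x₁ ∈ Ioo (0:ℝ) R, ENNReal.ofReal (x₁ ^ (β-1)) * J₂ x₁
        = ∫⁻ s in Ioo (0:ℝ) (8*R), ENNReal.ofReal (x₁ ^ (β-1)) *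
            (Ioc x₁ (2*R)).indicator (fun s => gf s * ENNReal.ofReal (s ^ (-β))) s := by
      intro x₁ hx₁
      rw [lintegral_const_mul' _ _ ENNReal.ofReal_ne_top]
      congr 1
      rw [lintegral_indicator measurableSet_Ioc, Measure.restrict_restrict measurableSet_Ioc,
        inter_eq_self_of_subset_left
          (fun s hs => mem_Ioo.mpr ⟨hx₁.1.trans hs.1, lt_of_le_of_lt hs.2 (by linarith)⟩)]
    have hmeas2 : AEMeasurable (Function.uncurry fun (x₁ : ℝ) (s : ℝ) =>
        ENNReal.ofReal (x₁ ^ (β-1)) *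
          (Ioc x₁ (2*R)).indicator (fun s => gf s * ENNReal.ofReal (s ^ (-β))) s)
        ((volume.restrict (Ioo (0:ℝ) R)).prod (volume.restrict (Ioo (0:ℝ) (8*R)))) := by
      have heq : (Function.uncurry fun (x₁ : ℝ) (s : ℝ) =>
          ENNReal.ofReal (x₁ ^ (β-1)) *
            (Ioc x₁ (2*R)).indicator (fun s => gf s * ENNReal.ofReal (s ^ (-β))) s)
          = fun w : ℝ × ℝ => ENNReal.ofReal (w.1 ^ (β-1)) *
              {w : ℝ × ℝ | w.1 < w.2 ∧ w.2 ≤ 2*R}.indicator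
                (fun w => gf w.2 * ENNReal.ofReal (w.2 ^ (-β))) w := by
        funext w
        simp only [Function.uncurry, Set.indicator_apply, mem_Ioc, mem_setOf_eq]
      rw [heq]
      refine Measurable.aemeasurable (Measurable.mul ?_ (Measurable.indicator ?_ ?_))
      · exact (measurable_fst.pow measurable_const).ennreal_ofReal
      · exact (hgfmeas.comp measurable_snd).mul
          ((measurable_snd.pow measurable_const).ennreal_ofReal)
      · exact (measurableSet_lt measurable_fst measurable_snd).inter
          (measurable_snd measurableSet_Iic)
    calc (∫⁻ x₁ in Ioo (0:ℝ) R, ENNReal.ofReal (x₁ ^ (β-1)) * J₂ x₁)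
        = ∫⁻ x₁ in Ioo (0:ℝ) R, ∫⁻ s in Ioo (0:ℝ) (8*R), ENNReal.ofReal (x₁ ^ (β-1)) *
            (Ioc x₁ (2*R)).indicator (fun s => gf s * ENNReal.ofReal (s ^ (-β))) s :=
          setLIntegral_congr_fun_ae measurableSet_Ioo (ae_of_all _ hrw)
      _ = ∫⁻ s in Ioo (0:ℝ) (8*R), ∫⁻ x₁ in Ioo (0:ℝ) R, ENNReal.ofReal (x₁ ^ (β-1)) *
            (Ioc x₁ (2*R)).indicator (fun s => gf s * ENNReal.ofReal (s ^ (-β))) s :=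
          lintegral_lintegral_swap hmeas2
      _ ≤ ∫⁻ s in Ioo (0:ℝ) (8*R), ENNReal.ofReal (1/β) * gf s := by
          refine lintegral_mono_ae (ae_restrict_of_forall_mem measurableSet_Ioo fun s hs => ?_)
          have hs0 : 0 < s := hs.1
          have hctop : gf s * ENNReal.ofReal (s ^ (-β)) ≠ ⊤ :=
            ENNReal.mul_ne_top (ENNReal.mul_ne_top (hGtop s) ENNReal.ofReal_ne_top)
              ENNReal.ofReal_ne_top
          calc (∫⁻ x₁ in Ioo (0:ℝ) R, ENNReal.ofReal (x₁ ^ (β-1)) *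
                (Ioc x₁ (2*R)).indicator (fun s => gf s * ENNReal.ofReal (s ^ (-β))) s)
              ≤ ∫⁻ x₁ in Ioo (0:ℝ) R, (Iio s).indicator
                  (fun x₁ => ENNReal.ofReal (x₁ ^ (β-1))) x₁ *
                  (gf s * ENNReal.ofReal (s ^ (-β))) := by
                refine lintegral_mono fun x₁ => ?_
                by_cases hmem : s ∈ Ioc x₁ (2*R)
                · rw [Set.indicator_of_mem hmem (fun s => gf s * ENNReal.ofReal (s ^ (-β))),
                    Set.indicator_of_mem (mem_Iio.mpr hmem.1)
                      (fun x₁ => ENNReal.ofReal (x₁ ^ (β-1)))]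
                · rw [Set.indicator_of_notMem hmem
                    (fun s => gf s * ENNReal.ofReal (s ^ (-β))), mul_zero]
                  exact zero_le
            _ = (∫⁻ x₁ in Ioo (0:ℝ) R, (Iio s).indicator
                  (fun x₁ => ENNReal.ofReal (x₁ ^ (β-1))) x₁) *
                  (gf s * ENNReal.ofReal (s ^ (-β))) := lintegral_mul_const' _ _ hctop
            _ ≤ ENNReal.ofReal (s ^ β / β) * (gf s * ENNReal.ofReal (s ^ (-β))) := by
                refine mul_le_mul_left ?_ _
                rw [lintegral_indicator measurableSet_Iio,
                  Measure.restrict_restrict measurableSet_Iio,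
                  show Iio s ∩ Ioo (0:ℝ) R = Ioo 0 (min s R) by
                    ext t
                    simp only [mem_inter_iff, mem_Iio, mem_Ioo, lt_min_iff]
                    tauto,
                  lint_rpow_Ioo (le_min hs0.le hR.le) hβ1,
                  show β - 1 + 1 = β by ring]
                refine ENNReal.ofReal_le_ofReal ?_
                have h7 : (min s R) ^ β ≤ s ^ β :=
                  Real.rpow_le_rpow (le_min hs0.le hR.le) (min_le_left _ _) (by linarith)
                gcongr
            _ = ENNReal.ofReal (1/β) * gf s := by
                rw [show ENNReal.ofReal (s ^ β / β) * (gf s * ENNReal.ofReal (s ^ (-β)))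
                  = (ENNReal.ofReal (s ^ β / β) * ENNReal.ofReal (s ^ (-β))) * gf s by ring,
                  ← ENNReal.ofReal_mul (by positivity),
                  show s ^ β / β * s ^ (-β) = (s ^ β * s ^ (-β)) / β by ring,
                  ← Real.rpow_add hs0, show β + -β = 0 by ring, Real.rpow_zero]
      _ = ENNReal.ofReal (1/β) * W := lintegral_const_mul' _ _ ENNReal.ofReal_ne_top
  have hJJ2 : ∀ x₁ : ℝ, 0 < x₁ → J x₁ ≤ J₂ x₁ := by
    intro x₁ hx0
    refine setLIntegral_mono (hgfmeas.mul
      ((measurable_id.pow measurable_const).ennreal_ofReal)) fun s hs => ?_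
    have hs0 : 0 < s := hx0.trans hs.1
    calc G' s * ENNReal.ofReal (s ^ (-q-1))
        ≤ G s * ENNReal.ofReal (s ^ (-q-1)) := mul_le_mul_left (hG'le s) _
      _ = gf s * ENNReal.ofReal (s ^ (-β)) := by
          rw [hgf, mul_assoc, ← ENNReal.ofReal_mul (Real.rpow_nonneg hs0.le _),
            ← Real.rpow_add hs0, show e + -β = -q-1 by rw [hβdef]; ring]
  have hJ2W : ∀ x₁ : ℝ, 0 < x₁ → J₂ x₁ ≤ ENNReal.ofReal (x₁ ^ (-β)) * W := by
    intro x₁ hx0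
    calc J₂ x₁ ≤ ∫⁻ s in Ioc x₁ (2*R), ENNReal.ofReal (x₁ ^ (-β)) * gf s := by
          refine setLIntegral_mono (measurable_const.mul hgfmeas) fun s hs => ?_
          rw [mul_comm]
          exact mul_le_mul_left (ENNReal.ofReal_le_ofReal
            (Real.rpow_le_rpow_of_nonpos hx0 hs.1.le (by linarith))) _
      _ = ENNReal.ofReal (x₁ ^ (-β)) * ∫⁻ s in Ioc x₁ (2*R), gf s :=
          lintegral_const_mul' _ _ ENNReal.ofReal_ne_top
      _ ≤ ENNReal.ofReal (x₁ ^ (-β)) * W :=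
          mul_le_mul_right (lintegral_mono_set fun s hs =>
            mem_Ioo.mpr ⟨hx0.trans hs.1, lt_of_le_of_lt hs.2 (by linarith)⟩) _
  have hT2 : (∫⁻ x₁ in Ioo (0:ℝ) R, ENNReal.ofReal (x₁ ^ (p * β - 1)) *
      (ENNReal.ofReal q * J x₁) ^ p) ≤ K2 * W ^ p := by
    have hpt : ∀ x₁ ∈ Ioo (0:ℝ) R, ENNReal.ofReal (x₁ ^ (p * β - 1)) *
        (ENNReal.ofReal q * J x₁) ^ p
        ≤ ENNReal.ofReal (q ^ p) * W ^ (p-1) * (ENNReal.ofReal (x₁ ^ (β-1)) * J₂ x₁) := by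
      intro x₁ hx₁
      obtain ⟨hx0, hxR⟩ := hx₁
      have hJle : J x₁ ≤ ENNReal.ofReal (x₁ ^ (-β)) * W := (hJJ2 x₁ hx0).trans (hJ2W x₁ hx0)
      have hJtop : J x₁ ≠ ⊤ :=
        (hJle.trans_lt (ENNReal.mul_lt_top ENNReal.ofReal_lt_top hWlt)).ne
      have h1 : (J x₁) ^ p ≤ (ENNReal.ofReal (x₁ ^ (-β))) ^ (p-1) * W ^ (p-1) * J₂ x₁ := by
        calc (J x₁) ^ p = (J x₁) ^ (p-1) * J x₁ := rpow_split hp hJtop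
        _ ≤ (ENNReal.ofReal (x₁ ^ (-β)) * W) ^ (p-1) * J₂ x₁ :=
            mul_le_mul' (ENNReal.rpow_le_rpow hJle hp1') (hJJ2 x₁ hx0)
        _ = _ := by rw [ENNReal.mul_rpow_of_nonneg _ _ hp1']
      have hxcomb : ENNReal.ofReal (x₁ ^ (p * β - 1)) *
          (ENNReal.ofReal (x₁ ^ (-β))) ^ (p-1) = ENNReal.ofReal (x₁ ^ (β-1)) := by
        rw [ENNReal.ofReal_rpow_of_pos (Real.rpow_pos_of_pos hx0 _),
          ← Real.rpow_mul hx0.le,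
          ← ENNReal.ofReal_mul (Real.rpow_nonneg hx0.le _), ← Real.rpow_add hx0,
          show p * β - 1 + -β * (p-1) = β - 1 by ring]
      calc ENNReal.ofReal (x₁ ^ (p * β - 1)) * (ENNReal.ofReal q * J x₁) ^ p
          = ENNReal.ofReal (x₁ ^ (p * β - 1)) * ((ENNReal.ofReal q) ^ p * (J x₁) ^ p) := by
            rw [ENNReal.mul_rpow_of_nonneg _ _ hp0.le]
        _ ≤ ENNReal.ofReal (x₁ ^ (p * β - 1)) * ((ENNReal.ofReal q) ^ p *
              ((ENNReal.ofReal (x₁ ^ (-β))) ^ (p-1) * W ^ (p-1) * J₂ x₁)) :=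
            mul_le_mul_right (mul_le_mul_right h1 _) _
        _ = (ENNReal.ofReal q) ^ p * W ^ (p-1) * ((ENNReal.ofReal (x₁ ^ (p * β - 1)) *
              (ENNReal.ofReal (x₁ ^ (-β))) ^ (p-1)) * J₂ x₁) := by ring
        _ = ENNReal.ofReal (q ^ p) * W ^ (p-1) * (ENNReal.ofReal (x₁ ^ (β-1)) * J₂ x₁) := by
            rw [hxcomb, ENNReal.ofReal_rpow_of_pos hq]
    calc (∫⁻ x₁ in Ioo (0:ℝ) R, ENNReal.ofReal (x₁ ^ (p * β - 1)) *
        (ENNReal.ofReal q * J x₁) ^ p)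
        ≤ ∫⁻ x₁ in Ioo (0:ℝ) R, ENNReal.ofReal (q ^ p) * W ^ (p-1) *
            (ENNReal.ofReal (x₁ ^ (β-1)) * J₂ x₁) :=
          lintegral_mono_ae (ae_restrict_of_forall_mem measurableSet_Ioo hpt)
      _ = ENNReal.ofReal (q ^ p) * W ^ (p-1) *
            ∫⁻ x₁ in Ioo (0:ℝ) R, ENNReal.ofReal (x₁ ^ (β-1)) * J₂ x₁ :=
          lintegral_const_mul' _ _ (ENNReal.mul_ne_top ENNReal.ofReal_ne_top
            (ENNReal.rpow_ne_top_of_nonneg hp1' hWtop))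
      _ ≤ ENNReal.ofReal (q ^ p) * W ^ (p-1) * (ENNReal.ofReal (1/β) * W) :=
          mul_le_mul_right hcore2 _
      _ = K2 * W ^ p := by rw [hK2, hWsplit]; ring
  have hT3 : (∫⁻ x₁ in Ioo (0:ℝ) R, ENNReal.ofReal (x₁ ^ (p * β - 1)) *
      (ENNReal.ofReal ((2*R) ^ (-q)) * G (2*R)) ^ p) ≤ K3 * W ^ p := by
    have hG2R : G (2*R) ≤ ENNReal.ofReal (2 ^ (-e) * (2*R) ^ (-(e+1))) * W :=
      (hGt (2*R) (by linarith)).trans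
        (mul_le_mul_right (hLW (2*R) (by linarith) (by linarith)) _)
    have hZb : (ENNReal.ofReal ((2*R) ^ (-q)) * G (2*R)) ^ p
        ≤ ENNReal.ofReal (((2*R) ^ (-q) * (2 ^ (-e) * (2*R) ^ (-(e+1)))) ^ p) * W ^ p := by
      calc (ENNReal.ofReal ((2*R) ^ (-q)) * G (2*R)) ^ p
          ≤ (ENNReal.ofReal ((2*R) ^ (-q)) *
              (ENNReal.ofReal (2 ^ (-e) * (2*R) ^ (-(e+1))) * W)) ^ p :=
            ENNReal.rpow_le_rpow (mul_le_mul_right hG2R _) hp0.le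
        _ = (ENNReal.ofReal ((2*R) ^ (-q) * (2 ^ (-e) * (2*R) ^ (-(e+1)))) * W) ^ p := by
            rw [← mul_assoc, ← ENNReal.ofReal_mul (by positivity)]
        _ = (ENNReal.ofReal ((2*R) ^ (-q) * (2 ^ (-e) * (2*R) ^ (-(e+1))))) ^ p * W ^ p :=
            ENNReal.mul_rpow_of_nonneg _ _ hp0.le
        _ = ENNReal.ofReal (((2*R) ^ (-q) * (2 ^ (-e) * (2*R) ^ (-(e+1)))) ^ p) * W ^ p := by
            rw [ENNReal.ofReal_rpow_of_pos (by positivity)]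
    calc (∫⁻ x₁ in Ioo (0:ℝ) R, ENNReal.ofReal (x₁ ^ (p * β - 1)) *
        (ENNReal.ofReal ((2*R) ^ (-q)) * G (2*R)) ^ p)
        ≤ ∫⁻ x₁ in Ioo (0:ℝ) R, ENNReal.ofReal (x₁ ^ (p * β - 1)) *
            (ENNReal.ofReal (((2*R) ^ (-q) * (2 ^ (-e) * (2*R) ^ (-(e+1)))) ^ p) * W ^ p) :=
          lintegral_mono fun x₁ => mul_le_mul_right hZb _
      _ = (∫⁻ x₁ in Ioo (0:ℝ) R, ENNReal.ofReal (x₁ ^ (p * β - 1))) *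
            (ENNReal.ofReal (((2*R) ^ (-q) * (2 ^ (-e) * (2*R) ^ (-(e+1)))) ^ p) * W ^ p) :=
          lintegral_mul_const' _ _ (ENNReal.mul_ne_top ENNReal.ofReal_ne_top
            (ENNReal.rpow_ne_top_of_nonneg hp0.le hWtop))
      _ = K3 * W ^ p := by
          rw [lint_rpow_Ioo hR.le ha, hK3]
          ring
  have m1 : Measurable fun x₁ : ℝ => ENNReal.ofReal (x₁ ^ (p * β - 1)) *
      (ENNReal.ofReal (q * x₁ ^ (-q)) * G' x₁) ^ p :=
    ((measurable_id.pow measurable_const).ennreal_ofReal).mul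
      ((((measurable_const.mul (measurable_id.pow measurable_const)).ennreal_ofReal).mul
        hG'meas).pow measurable_const)
  have m2 : Measurable fun x₁ : ℝ => ENNReal.ofReal (x₁ ^ (p * β - 1)) *
      (ENNReal.ofReal q * J x₁) ^ p :=
    ((measurable_id.pow measurable_const).ennreal_ofReal).mul
      (((measurable_const.mul hJmeas)).pow measurable_const)
  calc (∫⁻ x₁ in Ioo (0:ℝ) R, ENNReal.ofReal (x₁ ^ (p * β - 1)) *
      (∫⁻ y' in ball z R, ENNReal.ofReal ((x₁ + dist x' y') ^ (-q)) ∂ν) ^ p)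
      ≤ ∫⁻ x₁ in Ioo (0:ℝ) R, 3 ^ p *
          (ENNReal.ofReal (x₁ ^ (p * β - 1)) * (ENNReal.ofReal (q * x₁ ^ (-q)) * G' x₁) ^ p
          + ENNReal.ofReal (x₁ ^ (p * β - 1)) * (ENNReal.ofReal q * J x₁) ^ p
          + ENNReal.ofReal (x₁ ^ (p * β - 1)) *
              (ENNReal.ofReal ((2*R) ^ (-q)) * G (2*R)) ^ p) := by
        refine lintegral_mono_ae (ae_restrict_of_forall_mem measurableSet_Ioo fun x₁ hx₁ => ?_)
        calc ENNReal.ofReal (x₁ ^ (p * β - 1)) *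
            (∫⁻ y' in ball z R, ENNReal.ofReal ((x₁ + dist x' y') ^ (-q)) ∂ν) ^ p
            ≤ ENNReal.ofReal (x₁ ^ (p * β - 1)) *
                (ENNReal.ofReal (q * x₁ ^ (-q)) * G' x₁ + ENNReal.ofReal q * J x₁
                  + ENNReal.ofReal ((2*R) ^ (-q)) * G (2*R)) ^ p :=
              mul_le_mul_right (ENNReal.rpow_le_rpow (hIbound x₁ hx₁) hp0.le) _
          _ ≤ ENNReal.ofReal (x₁ ^ (p * β - 1)) *
                (3 ^ p * ((ENNReal.ofReal (q * x₁ ^ (-q)) * G' x₁) ^ p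
                  + (ENNReal.ofReal q * J x₁) ^ p
                  + (ENNReal.ofReal ((2*R) ^ (-q)) * G (2*R)) ^ p)) :=
              mul_le_mul_right (three_rpow hp0.le _ _ _) _
          _ = 3 ^ p *
              (ENNReal.ofReal (x₁ ^ (p * β - 1)) * (ENNReal.ofReal (q * x₁ ^ (-q)) * G' x₁) ^ p
              + ENNReal.ofReal (x₁ ^ (p * β - 1)) * (ENNReal.ofReal q * J x₁) ^ p
              + ENNReal.ofReal (x₁ ^ (p * β - 1)) *
                  (ENNReal.ofReal ((2*R) ^ (-q)) * G (2*R)) ^ p) := by ring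
    _ = 3 ^ p * ∫⁻ x₁ in Ioo (0:ℝ) R,
          (ENNReal.ofReal (x₁ ^ (p * β - 1)) * (ENNReal.ofReal (q * x₁ ^ (-q)) * G' x₁) ^ p
          + ENNReal.ofReal (x₁ ^ (p * β - 1)) * (ENNReal.ofReal q * J x₁) ^ p
          + ENNReal.ofReal (x₁ ^ (p * β - 1)) *
              (ENNReal.ofReal ((2*R) ^ (-q)) * G (2*R)) ^ p) :=
        lintegral_const_mul' _ _ h3top
    _ ≤ 3 ^ p * (K1 * W ^ p + K2 * W ^ p + K3 * W ^ p) := by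
        refine mul_le_mul_right ?_ _
        rw [lintegral_add_left (f := fun x₁ => ENNReal.ofReal (x₁ ^ (p * β - 1)) * (ENNReal.ofReal (q * x₁ ^ (-q)) * G' x₁) ^ p + ENNReal.ofReal (x₁ ^ (p * β - 1)) * (ENNReal.ofReal q * J x₁) ^ p) (m1.add m2), lintegral_add_left m1]
        exact add_le_add (add_le_add hT1 hT2) hT3
    _ = D * W ^ p := by rw [hD]; ring

theorem stmt_10
    (N k : ℕ) (hN : 3 ≤ N) (hk1 : 1 ≤ k) (hk : k + 2 < N)
    (μ H αm αp : ℝ)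
    (hH : H = ((N : ℝ) - (k : ℝ) - 2) / 2) (hμ : μ ≤ H ^ 2)
    (hαm : αm = H - Real.sqrt (H ^ 2 - μ)) (hαp : αp = H + Real.sqrt (H ^ 2 - μ))
    (p ϑ : ℝ)
    (hp1 : max 1 (((N : ℝ) - (k : ℝ) - αm) / ((N : ℝ) - 2 - αm)) < p)
    (hp2 : p < (2 + αp) / αp)
    (hϑ : ϑ = (2 - (p - 1) * αp) / p)
    (R : ℝ) (hR : 0 < R)
    :
    ∃ C > 0, ∀ ν : Measure (EuclideanSpace ℝ (Fin k)), IsFiniteMeasure ν →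
      (∃ K, IsCompact K ∧ K ⊆ Metric.ball (0 : EuclideanSpace ℝ (Fin k)) (R / 2) ∧
        ν Kᶜ = 0) →
      (∫⁻ x' in Metric.ball (0 : EuclideanSpace ℝ (Fin k)) R,
        ∫⁻ x₁ in Ioo (0 : ℝ) R,
          ENNReal.ofReal (x₁ ^ ((N : ℝ) - (k : ℝ) - 1 - (p + 1) * αm)) *
            (∫⁻ y' in Metric.ball (0 : EuclideanSpace ℝ (Fin k)) R,
              ENNReal.ofReal ((x₁ + dist x' y') ^ (-((N : ℝ) - 2 * αm - 2))) ∂ν) ^ p)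
      ≤ ENNReal.ofReal C *
        ∫⁻ x' : EuclideanSpace ℝ (Fin k),
          (∫⁻ r in Ioo (0 : ℝ) (8 * R),
            ν (Metric.ball x' r) * ENNReal.ofReal (r ^ (ϑ - (k : ℝ) - 1))) ^ p := by
  have hs0 : 0 ≤ Real.sqrt (H ^ 2 - μ) := Real.sqrt_nonneg _
  have hsum : αm + αp = (N : ℝ) - k - 2 := by
    rw [hαm, hαp, hH]; ring
  have hNk : (k : ℝ) + 2 < (N : ℝ) := by exact_mod_cast hk
  have hk1' : (1 : ℝ) ≤ (k : ℝ) := by exact_mod_cast hk1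
  have hH0 : 0 < H := by rw [hH]; linarith
  have hαp0 : 0 < αp := by rw [hαp]; linarith
  have hαmp : αm ≤ αp := by rw [hαm, hαp]; linarith
  have hp : 1 < p := lt_of_le_of_lt (le_max_left _ _) hp1
  have hp0 : (0:ℝ) < p := by linarith
  have hpαp : p * αp < 2 + αp := (lt_div_iff₀ hαp0).mp hp2
  have hϑpos : 0 < ϑ := by
    rw [hϑ]
    apply div_pos (by nlinarith) hp0
  have hϑ2 : ϑ ≤ 2 := by
    rw [hϑ, div_le_iff₀ hp0]
    nlinarith [mul_nonneg (by linarith : (0:ℝ) ≤ p - 1) hαp0.le]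
  have hpϑ : p * ϑ = 2 - (p - 1) * αp := by
    rw [hϑ]; field_simp
  set q : ℝ := (N : ℝ) - 2 * αm - 2 with hqdef
  set e : ℝ := ϑ - (k : ℝ) - 1 with hedef
  have hq : 0 < q := by rw [hqdef]; linarith
  have he : e ≤ 0 := by rw [hedef]; linarith
  have hβ : 0 < q + e + 1 := by rw [hqdef, hedef]; linarith
  have ha : (N : ℝ) - (k : ℝ) - 1 - (p + 1) * αm = p * (q + e + 1) - 1 := by
    rw [hqdef, hedef]
    linear_combination (p - 1) * hsum - hpϑ
  obtain ⟨C, hC, hbound⟩ := pointwise_bound (E := EuclideanSpace ℝ (Fin k)) R p q e hR hp hq he hβ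
  refine ⟨C, hC, ?_⟩
  intro ν hν _
  simp only [ha]
  calc (∫⁻ x' in Metric.ball (0 : EuclideanSpace ℝ (Fin k)) R,
      ∫⁻ x₁ in Ioo (0 : ℝ) R,
        ENNReal.ofReal (x₁ ^ (p * (q + e + 1) - 1)) *
          (∫⁻ y' in Metric.ball (0 : EuclideanSpace ℝ (Fin k)) R,
            ENNReal.ofReal ((x₁ + dist x' y') ^ (-q)) ∂ν) ^ p)
      ≤ ∫⁻ x' in Metric.ball (0 : EuclideanSpace ℝ (Fin k)) R,
          ENNReal.ofReal C * (∫⁻ r in Ioo (0 : ℝ) (8 * R),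
            ν (Metric.ball x' r) * ENNReal.ofReal (r ^ e)) ^ p :=
        lintegral_mono_ae (ae_restrict_of_forall_mem measurableSet_ball
          fun x' hx' => hbound ν hν 0 x' hx')
    _ = ENNReal.ofReal C * ∫⁻ x' in Metric.ball (0 : EuclideanSpace ℝ (Fin k)) R,
          (∫⁻ r in Ioo (0 : ℝ) (8 * R),
            ν (Metric.ball x' r) * ENNReal.ofReal (r ^ e)) ^ p :=
        lintegral_const_mul' _ _ ENNReal.ofReal_ne_top
    _ ≤ ENNReal.ofReal C * ∫⁻ x' : EuclideanSpace ℝ (Fin k),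
          (∫⁻ r in Ioo (0 : ℝ) (8 * R),
            ν (Metric.ball x' r) * ENNReal.ofReal (r ^ e)) ^ p :=
        mul_le_mul_right (setLIntegral_le_lintegral _ _) _
end

section
/- Let R > 0. There exists a constant C = C(R, N, k, μ, p) such that for every finite positive Borel measure ν on ℝ^k with compact support contained in B^k(0, R/2), ∫_{B^k(0,R)} ∫_0^R x₁^{N−k−1−(p+1)α₋} ( ∫_{B^k(0,R)} ( x₁ + |x′−y′| )^{−(N−2α₋−2)} dν(y′) )^p dx₁ dx′ ≥ C^{−1} ∫_{ℝ^k} ( sup_{0<r<R/2} ν(B^k(x′,r)) r^{ϑ−k} )^p dx′. -/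
open MeasureTheory Metric Set
open scoped ENNReal

lemma aux_lint_rpow {a r : ℝ} (ha : -1 < a) (hr : 0 < r) :
    ∫⁻ x in Ioo (0:ℝ) r, ENNReal.ofReal (x ^ a) = ENNReal.ofReal (r ^ (a+1) / (a+1)) := by
  have hint : IntegrableOn (fun x : ℝ => x ^ a) (Ioo 0 r) := by
    have h1 : IntervalIntegrable (fun x : ℝ => x ^ a) volume 0 r :=
      intervalIntegral.intervalIntegrable_rpow' ha
    have h2 := (intervalIntegrable_iff_integrableOn_Ioc_of_le hr.le).mp h1
    exact h2.mono_set Ioo_subset_Ioc_self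
  rw [← ofReal_integral_eq_lintegral_ofReal hint ?_]
  · congr 1
    have h3 : ∫ x in Ioo (0:ℝ) r, x ^ a = ∫ x in (0:ℝ)..r, x ^ a := by
      rw [intervalIntegral.integral_of_le hr.le, integral_Ioc_eq_integral_Ioo]
    rw [h3, integral_rpow (Or.inl ha), Real.zero_rpow (by linarith : a + 1 ≠ 0), sub_zero]
  · exact (ae_restrict_iff' measurableSet_Ioo).2
      (Filter.Eventually.of_forall fun x hx => Real.rpow_nonneg hx.1.le a)

theorem stmt_11
    (N k : ℕ) (hN : 3 ≤ N) (hk1 : 1 ≤ k) (hk : k + 2 < N)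
    (μ H αm αp : ℝ)
    (hH : H = ((N : ℝ) - (k : ℝ) - 2) / 2) (hμ : μ ≤ H ^ 2)
    (hαm : αm = H - Real.sqrt (H ^ 2 - μ)) (hαp : αp = H + Real.sqrt (H ^ 2 - μ))
    (p ϑ : ℝ)
    (hp1 : max 1 (((N : ℝ) - (k : ℝ) - αm) / ((N : ℝ) - 2 - αm)) < p)
    (hp2 : p < (2 + αp) / αp)
    (hϑ : ϑ = (2 - (p - 1) * αp) / p)
    (R : ℝ) (hR : 0 < R)
    :
    ∃ C > 0, ∀ ν : Measure (EuclideanSpace ℝ (Fin k)), IsFiniteMeasure ν →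
      (∃ K, IsCompact K ∧ K ⊆ Metric.ball (0 : EuclideanSpace ℝ (Fin k)) (R / 2) ∧
        ν Kᶜ = 0) →
      (ENNReal.ofReal C)⁻¹ *
        ∫⁻ x' : EuclideanSpace ℝ (Fin k),
          (⨆ r ∈ Ioo (0 : ℝ) (R / 2),
            ν (Metric.ball x' r) * ENNReal.ofReal (r ^ (ϑ - (k : ℝ)))) ^ p
      ≤ (∫⁻ x' in Metric.ball (0 : EuclideanSpace ℝ (Fin k)) R,
        ∫⁻ x₁ in Ioo (0 : ℝ) R,
          ENNReal.ofReal (x₁ ^ ((N : ℝ) - (k : ℝ) - 1 - (p + 1) * αm)) *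
            (∫⁻ y' in Metric.ball (0 : EuclideanSpace ℝ (Fin k)) R,
              ENNReal.ofReal ((x₁ + dist x' y') ^ (-((N : ℝ) - 2 * αm - 2))) ∂ν) ^ p) := by
  have hNk : (k : ℝ) + 2 < (N : ℝ) := by exact_mod_cast hk
  have hk1' : (1 : ℝ) ≤ (k : ℝ) := by exact_mod_cast hk1
  have hs : (0:ℝ) ≤ Real.sqrt (H ^ 2 - μ) := Real.sqrt_nonneg _
  have hH0 : 0 < H := by rw [hH]; linarith
  have hαp0 : 0 < αp := by rw [hαp]; linarith
  have hαmle : αm ≤ αp := by rw [hαm, hαp]; linarith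
  have hsum : αm + αp = (N : ℝ) - (k : ℝ) - 2 := by rw [hαm, hαp, hH]; ring
  have hp1' : (1:ℝ) < p := lt_of_le_of_lt (le_max_left _ _) hp1
  have hp0 : (0:ℝ) < p := by linarith
  have hpαp : p * αp < 2 + αp := (lt_div_iff₀ hαp0).mp hp2
  set a : ℝ := (N : ℝ) - (k : ℝ) - 1 - (p + 1) * αm with ha_def
  set β : ℝ := (N : ℝ) - 2 * αm - 2 with hβ_def
  have hβ : 0 < β := by
    have : 2 * αm ≤ (N : ℝ) - (k : ℝ) - 2 := by linarith
    simp only [hβ_def]; linarith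
  have ha1 : 0 < a + 1 := by
    have hmul : 0 ≤ p * (αp - αm) := mul_nonneg hp0.le (sub_nonneg.2 hαmle)
    simp only [ha_def]; nlinarith
  have ha : -1 < a := by linarith
  have hexp : (ϑ - (k : ℝ)) * p = (a + 1) - β * p := by
    have hθp : ϑ * p = 2 - (p - 1) * αp := by
      rw [hϑ]; field_simp
    simp only [ha_def, hβ_def]
    linear_combination hθp + (1 - p) * hsum
  set C : ℝ := (a + 1) * (2:ℝ) ^ (β * p) with hC_def
  have hC : 0 < C := by positivity
  refine ⟨C, hC, ?_⟩
  rintro ν hν ⟨K, hKc, hKs, hKz⟩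
  have hCne : (ENNReal.ofReal C) ≠ 0 := (ENNReal.ofReal_pos.2 hC).ne'
  have hCinv_ne_top : (ENNReal.ofReal C)⁻¹ ≠ ⊤ := by
    simp [hCne]
  -- the inner double integral
  set F : EuclideanSpace ℝ (Fin k) → ℝ≥0∞ := fun x' =>
    ∫⁻ x₁ in Ioo (0 : ℝ) R,
      ENNReal.ofReal (x₁ ^ a) *
        (∫⁻ y' in Metric.ball (0 : EuclideanSpace ℝ (Fin k)) R,
          ENNReal.ofReal ((x₁ + dist x' y') ^ (-β)) ∂ν) ^ p with hF_def
  set G : EuclideanSpace ℝ (Fin k) → ℝ≥0∞ := fun x' =>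
    (⨆ r ∈ Ioo (0 : ℝ) (R / 2),
      ν (Metric.ball x' r) * ENNReal.ofReal (r ^ (ϑ - (k : ℝ)))) ^ p with hG_def
  -- support of G
  have hGsupp : Function.support G ⊆ Metric.ball (0 : EuclideanSpace ℝ (Fin k)) R := by
    intro x' hx'
    by_contra hx'R
    apply hx'
    have hball : ∀ r ∈ Ioo (0:ℝ) (R/2), ν (Metric.ball x' r) = 0 := by
      intro r hr
      have hsub : Metric.ball x' r ⊆ Kᶜ := by
        intro y hy hyK
        have h1 : dist y (0 : EuclideanSpace ℝ (Fin k)) < R / 2 := hKs hyK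
        have h2 : dist x' y < r := mem_ball'.mp hy
        have : dist x' (0 : EuclideanSpace ℝ (Fin k)) < R := by
          calc dist x' (0 : EuclideanSpace ℝ (Fin k)) ≤ dist x' y + dist y 0 := dist_triangle _ _ _
          _ < r + R / 2 := by linarith
          _ ≤ R := by linarith [hr.2]
        exact hx'R this
      exact le_antisymm (hKz ▸ measure_mono hsub) zero_le
    have : (⨆ r ∈ Ioo (0:ℝ) (R/2),
        ν (Metric.ball x' r) * ENNReal.ofReal (r ^ (ϑ - (k : ℝ)))) = 0 := by
      refine le_antisymm (iSup₂_le fun r hr => ?_) zero_le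
      rw [hball r hr, zero_mul]
    simp only [hG_def, this]
    exact ENNReal.zero_rpow_of_pos hp0
  have hGeq : ∫⁻ x', G x' = ∫⁻ x' in Metric.ball (0 : EuclideanSpace ℝ (Fin k)) R, G x' :=
    (setLIntegral_eq_of_support_subset hGsupp).symm
  -- key pointwise estimate
  have key : ∀ x' : EuclideanSpace ℝ (Fin k), ∀ r ∈ Ioo (0:ℝ) (R/2),
      (ν (Metric.ball x' r) * ENNReal.ofReal (r ^ (ϑ - (k : ℝ)))) ^ p
        ≤ ENNReal.ofReal C * F x' := by
    intro x' r hr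
    obtain ⟨hr0, hrR⟩ := hr
    set νb := ν (Metric.ball x' r) with hνb_def
    have hνb_top : νb ≠ ⊤ := measure_ne_top ν _
    have h2r : (0:ℝ) < 2 * r := by linarith
    -- inner integral lower bound for x₁ ∈ (0, r)
    have h1 : ∀ x₁ ∈ Ioo (0:ℝ) r,
        ENNReal.ofReal ((2*r) ^ (-β)) * νb ≤
          ∫⁻ y' in Metric.ball (0 : EuclideanSpace ℝ (Fin k)) R,
            ENNReal.ofReal ((x₁ + dist x' y') ^ (-β)) ∂ν := by
      intro x₁ hx₁
      have hsub : νb ≤ ν (Metric.ball x' r ∩ Metric.ball (0 : EuclideanSpace ℝ (Fin k)) R) := by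
        have hss : Metric.ball x' r ⊆
            (Metric.ball x' r ∩ Metric.ball (0 : EuclideanSpace ℝ (Fin k)) R) ∪ Kᶜ := by
          intro y hy
          by_cases hyK : y ∈ K
          · exact Or.inl ⟨hy, ball_subset_ball (by linarith) (hKs hyK)⟩
          · exact Or.inr hyK
        calc νb ≤ ν ((Metric.ball x' r ∩ Metric.ball (0 : EuclideanSpace ℝ (Fin k)) R) ∪ Kᶜ) :=
              measure_mono hss
        _ ≤ ν (Metric.ball x' r ∩ Metric.ball (0 : EuclideanSpace ℝ (Fin k)) R) + ν Kᶜ :=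
              measure_union_le _ _
        _ = _ := by rw [hKz, add_zero]
      calc ENNReal.ofReal ((2*r) ^ (-β)) * νb
          ≤ ENNReal.ofReal ((2*r) ^ (-β)) *
            ν (Metric.ball x' r ∩ Metric.ball (0 : EuclideanSpace ℝ (Fin k)) R) :=
            mul_le_mul_right hsub _
        _ = ∫⁻ _ in Metric.ball x' r ∩ Metric.ball (0 : EuclideanSpace ℝ (Fin k)) R,
              ENNReal.ofReal ((2*r) ^ (-β)) ∂ν := (setLIntegral_const _ _).symm
        _ ≤ ∫⁻ y' in Metric.ball x' r ∩ Metric.ball (0 : EuclideanSpace ℝ (Fin k)) R,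
              ENNReal.ofReal ((x₁ + dist x' y') ^ (-β)) ∂ν := by
            refine setLIntegral_mono' (measurableSet_ball.inter measurableSet_ball)
              (fun y hy => ENNReal.ofReal_le_ofReal ?_)
            have hd : dist x' y < r := mem_ball'.mp hy.1
            have hx1 : (0:ℝ) < x₁ := hx₁.1
            refine Real.rpow_le_rpow_of_nonpos (by positivity) ?_ (by linarith)
            have := dist_nonneg (x := x') (y := y)
            linarith [hx₁.2]
        _ ≤ _ := lintegral_mono_set inter_subset_right
    set Q : ℝ≥0∞ := (ENNReal.ofReal ((2*r) ^ (-β)) * νb) ^ p with hQ_def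
    have hQ_top : Q ≠ ⊤ :=
      ENNReal.rpow_ne_top_of_nonneg hp0.le (ENNReal.mul_ne_top ENNReal.ofReal_ne_top hνb_top)
    have h2 : ENNReal.ofReal (r ^ (a+1) / (a+1)) * Q ≤ F x' := by
      calc ENNReal.ofReal (r ^ (a+1) / (a+1)) * Q
          = (∫⁻ x₁ in Ioo (0:ℝ) r, ENNReal.ofReal (x₁ ^ a)) * Q := by
            rw [aux_lint_rpow ha hr0]
        _ = ∫⁻ x₁ in Ioo (0:ℝ) r, ENNReal.ofReal (x₁ ^ a) * Q :=
            (lintegral_mul_const' Q _ hQ_top).symm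
        _ ≤ ∫⁻ x₁ in Ioo (0:ℝ) r, ENNReal.ofReal (x₁ ^ a) *
              (∫⁻ y' in Metric.ball (0 : EuclideanSpace ℝ (Fin k)) R,
                ENNReal.ofReal ((x₁ + dist x' y') ^ (-β)) ∂ν) ^ p := by
            refine setLIntegral_mono' measurableSet_Ioo (fun x₁ hx₁ => ?_)
            exact mul_le_mul_right (ENNReal.rpow_le_rpow (h1 x₁ hx₁) hp0.le) _
        _ ≤ F x' := lintegral_mono_set (Ioo_subset_Ioo_right (by linarith))
    -- scalar identity
    have hreal : (r ^ (ϑ - (k:ℝ))) ^ p = C * (r ^ (a+1) / (a+1)) * ((2*r) ^ (-β)) ^ p := by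
      have e1 : (r ^ (ϑ - (k:ℝ))) ^ p = r ^ ((ϑ - (k:ℝ)) * p) := (Real.rpow_mul hr0.le _ _).symm
      have e2 : ((2*r) ^ (-β)) ^ p = (2:ℝ) ^ (-(β*p)) * r ^ (-(β*p)) := by
        rw [← Real.rpow_mul h2r.le, Real.mul_rpow (by norm_num) hr0.le, neg_mul]
      rw [e1, e2, hexp, hC_def]
      rw [show (a + 1) - β * p = (a+1) + (-(β*p)) by ring, Real.rpow_add hr0,
        Real.rpow_neg (by norm_num : (0:ℝ) ≤ 2)]
      have h2βp : (0:ℝ) < (2:ℝ) ^ (β * p) := Real.rpow_pos_of_pos (by norm_num) _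
      field_simp
    -- assemble
    have hmulp : (νb * ENNReal.ofReal (r ^ (ϑ - (k:ℝ)))) ^ p
        = ENNReal.ofReal ((r ^ (ϑ - (k:ℝ))) ^ p) * νb ^ p := by
      rw [ENNReal.mul_rpow_of_nonneg _ _ hp0.le, mul_comm,
        ENNReal.ofReal_rpow_of_pos (Real.rpow_pos_of_pos hr0 _)]
    have hQeq : ENNReal.ofReal (r ^ (a+1) / (a+1)) * Q
        = ENNReal.ofReal (r ^ (a+1) / (a+1) * ((2*r) ^ (-β)) ^ p) * νb ^ p := by
      rw [hQ_def, ENNReal.mul_rpow_of_nonneg _ _ hp0.le,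
        ENNReal.ofReal_rpow_of_pos (Real.rpow_pos_of_pos h2r _),
        ENNReal.ofReal_mul (by positivity)]
      ring
    calc (νb * ENNReal.ofReal (r ^ (ϑ - (k:ℝ)))) ^ p
        = ENNReal.ofReal ((r ^ (ϑ - (k:ℝ))) ^ p) * νb ^ p := hmulp
      _ = ENNReal.ofReal C * (ENNReal.ofReal (r ^ (a+1) / (a+1)) * Q) := by
          rw [hQeq, ← mul_assoc, ← ENNReal.ofReal_mul hC.le, hreal]; ring_nf
      _ ≤ ENNReal.ofReal C * F x' := mul_le_mul_right h2 _
  -- pointwise: C⁻¹ * G ≤ F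
  have hpt : ∀ x' : EuclideanSpace ℝ (Fin k), (ENNReal.ofReal C)⁻¹ * G x' ≤ F x' := by
    intro x'
    have hsup : (⨆ r ∈ Ioo (0:ℝ) (R/2),
        ν (Metric.ball x' r) * ENNReal.ofReal (r ^ (ϑ - (k : ℝ))))
          ≤ (ENNReal.ofReal C * F x') ^ p⁻¹ := by
      refine iSup₂_le fun r hr => ?_
      have h := key x' r hr
      calc ν (Metric.ball x' r) * ENNReal.ofReal (r ^ (ϑ - (k : ℝ)))
          = ((ν (Metric.ball x' r) * ENNReal.ofReal (r ^ (ϑ - (k : ℝ)))) ^ p) ^ p⁻¹ := by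
            rw [← ENNReal.rpow_mul, mul_inv_cancel₀ hp0.ne', ENNReal.rpow_one]
        _ ≤ (ENNReal.ofReal C * F x') ^ p⁻¹ := ENNReal.rpow_le_rpow h (by positivity)
    have hG : G x' ≤ ENNReal.ofReal C * F x' := by
      calc G x' ≤ ((ENNReal.ofReal C * F x') ^ p⁻¹) ^ p :=
            ENNReal.rpow_le_rpow hsup hp0.le
        _ = ENNReal.ofReal C * F x' := by
            rw [← ENNReal.rpow_mul, inv_mul_cancel₀ hp0.ne', ENNReal.rpow_one]
    calc (ENNReal.ofReal C)⁻¹ * G x' ≤ (ENNReal.ofReal C)⁻¹ * (ENNReal.ofReal C * F x') :=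
          mul_le_mul_right hG _
      _ = F x' := by rw [← mul_assoc, ENNReal.inv_mul_cancel hCne ENNReal.ofReal_ne_top, one_mul]
  calc (ENNReal.ofReal C)⁻¹ * ∫⁻ x', G x'
      = ∫⁻ x' in Metric.ball (0 : EuclideanSpace ℝ (Fin k)) R, (ENNReal.ofReal C)⁻¹ * G x' := by
        rw [hGeq, lintegral_const_mul' _ _ hCinv_ne_top]
    _ ≤ ∫⁻ x' in Metric.ball (0 : EuclideanSpace ℝ (Fin k)) R, F x' := lintegral_mono hpt
end

section
/- Let k ≥ 1 be an integer, ν a finite positive Borel measure on ℝ^k, a > 0, p ≥ 1, R > 0 and x′ ∈ ℝ^k. Then ∫_0^{4R} ( ν(B^k(x′,r)) r^{−a} )^p r^{−1} dr ≤ C ( ∫_0^{8R} ν(B^k(x′,r)) r^{−a−1} dr )^p, where C is a constant depending only on p and a (one may take C = 2^{2ap} (ln 2)^{1−p}). -/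
open MeasureTheory Metric Set
open scoped ENNReal

theorem stmt_12 (a p : ℝ) (ha : 0 < a) (hp : 1 ≤ p) :
    ∃ C > 0, ∀ (k : ℕ), 1 ≤ k →
      ∀ ν : Measure (EuclideanSpace ℝ (Fin k)), IsFiniteMeasure ν →
      ∀ R : ℝ, 0 < R → ∀ x' : EuclideanSpace ℝ (Fin k),
        ∫⁻ r in Ioo (0 : ℝ) (4 * R),
            (ν (Metric.ball x' r) * ENNReal.ofReal (r ^ (-a))) ^ p *
              ENNReal.ofReal r⁻¹
          ≤ ENNReal.ofReal C *
            (∫⁻ r in Ioo (0 : ℝ) (8 * R),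
              ν (Metric.ball x' r) * ENNReal.ofReal (r ^ (-a - 1))) ^ p := by
  refine ⟨(2 : ℝ) ^ ((a + 1) * (p - 1)), Real.rpow_pos_of_pos two_pos _, ?_⟩
  intro k hk ν hν R hR x'
  set I : ℝ≥0∞ := ∫⁻ r in Ioo (0 : ℝ) (8 * R),
      ν (Metric.ball x' r) * ENNReal.ofReal (r ^ (-a - 1)) with hI
  have hp0 : (0 : ℝ) < p := lt_of_lt_of_le one_pos hp
  have hp1 : (0 : ℝ) ≤ p - 1 := by linarith
  -- Case I = ∞
  rcases eq_or_ne I ⊤ with hItop | hIfin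
  · rw [hItop, ENNReal.top_rpow_of_pos hp0, ENNReal.mul_top]
    · exact le_top
    · exact (ENNReal.ofReal_pos.mpr (Real.rpow_pos_of_pos two_pos _)).ne'
  -- Key pointwise bound
  have key : ∀ r ∈ Ioo (0 : ℝ) (4 * R),
      ν (Metric.ball x' r) * ENNReal.ofReal (r ^ (-a))
        ≤ ENNReal.ofReal ((2 : ℝ) ^ (a + 1)) * I := by
    intro r hr
    obtain ⟨hr0, hr4⟩ := hr
    have hsub : Ioo r (2 * r) ⊆ Ioo (0 : ℝ) (8 * R) := fun s hs =>
      ⟨lt_trans hr0 hs.1, by nlinarith [hs.2]⟩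
    have h1 : ∫⁻ s in Ioo r (2 * r),
        ν (Metric.ball x' r) * ENNReal.ofReal ((2 * r) ^ (-a - 1)) ≤ I := by
      refine le_trans ?_ (lintegral_mono_set hsub)
      refine lintegral_mono_ae ?_
      filter_upwards [ae_restrict_mem measurableSet_Ioo] with s hs
      refine mul_le_mul' (measure_mono (Metric.ball_subset_ball hs.1.le)) ?_
      exact ENNReal.ofReal_le_ofReal
        (Real.rpow_le_rpow_of_nonpos (lt_trans hr0 hs.1) hs.2.le (by linarith))
    rw [setLIntegral_const, Real.volume_Ioo] at h1
    have hvol : (2 * r - r) = r := by ring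
    rw [hvol] at h1
    -- rewrite (2r)^(-a-1) * r = 2^(-a-1) * r^(-a)
    have hrw : ENNReal.ofReal ((2 * r) ^ (-a - 1)) * ENNReal.ofReal r
        = ENNReal.ofReal ((2 : ℝ) ^ (-a - 1)) * ENNReal.ofReal (r ^ (-a)) := by
      rw [← ENNReal.ofReal_mul (by positivity), ← ENNReal.ofReal_mul (by positivity)]
      congr 1
      rw [Real.mul_rpow (by norm_num) hr0.le, mul_assoc,
        ← Real.rpow_add_one hr0.ne']
      norm_num
    rw [mul_assoc, hrw, ← mul_assoc] at h1
    calc ν (Metric.ball x' r) * ENNReal.ofReal (r ^ (-a))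
        = ENNReal.ofReal ((2 : ℝ) ^ (a + 1)) *
          (ν (Metric.ball x' r) * ENNReal.ofReal ((2 : ℝ) ^ (-a - 1)) *
            ENNReal.ofReal (r ^ (-a))) := by
          rw [← mul_assoc, mul_comm (ENNReal.ofReal ((2:ℝ)^(a+1))), mul_assoc,
            mul_assoc, ← mul_assoc (ENNReal.ofReal ((2:ℝ)^(-a-1))),
            ← ENNReal.ofReal_mul (by positivity), ← Real.rpow_add two_pos]
          norm_num
      _ ≤ ENNReal.ofReal ((2 : ℝ) ^ (a + 1)) * I :=
          mul_le_mul_right h1 _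
  set K : ℝ≥0∞ := ENNReal.ofReal ((2 : ℝ) ^ (a + 1)) * I with hK
  have hKfin : K ≠ ⊤ := ENNReal.mul_ne_top ENNReal.ofReal_ne_top hIfin
  -- pointwise bound on the integrand
  have step : ∫⁻ r in Ioo (0 : ℝ) (4 * R),
        (ν (Metric.ball x' r) * ENNReal.ofReal (r ^ (-a))) ^ p * ENNReal.ofReal r⁻¹
      ≤ ∫⁻ r in Ioo (0 : ℝ) (4 * R),
        K ^ (p - 1) * (ν (Metric.ball x' r) * ENNReal.ofReal (r ^ (-a - 1))) := by
    refine lintegral_mono_ae ?_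
    filter_upwards [ae_restrict_mem measurableSet_Ioo] with r hr
    set f := ν (Metric.ball x' r) * ENNReal.ofReal (r ^ (-a)) with hf
    have hfp : f ^ p = f ^ (p - 1) * f := by
      nth_rewrite 3 [← ENNReal.rpow_one f]
      rw [← ENNReal.rpow_add_of_nonneg _ _ hp1 zero_le_one]
      norm_num
    have hsplit : ENNReal.ofReal (r ^ (-a)) * ENNReal.ofReal r⁻¹
        = ENNReal.ofReal (r ^ (-a - 1)) := by
      rw [← ENNReal.ofReal_mul (Real.rpow_nonneg hr.1.le _)]
      congr 1
      rw [← Real.rpow_neg_one r, ← Real.rpow_add hr.1]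
      ring_nf
    calc f ^ p * ENNReal.ofReal r⁻¹
        = f ^ (p - 1) * (f * ENNReal.ofReal r⁻¹) := by rw [hfp]; ring
      _ ≤ K ^ (p - 1) * (f * ENNReal.ofReal r⁻¹) :=
          mul_le_mul_left (ENNReal.rpow_le_rpow (key r hr) hp1) _
      _ = K ^ (p - 1) * (ν (Metric.ball x' r) * ENNReal.ofReal (r ^ (-a - 1))) := by
          rw [hf, mul_assoc, hsplit]
  rw [lintegral_const_mul' _ _ (ENNReal.rpow_ne_top_of_nonneg hp1 hKfin)] at step
  have step2 : ∫⁻ r in Ioo (0 : ℝ) (4 * R),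
      ν (Metric.ball x' r) * ENNReal.ofReal (r ^ (-a - 1)) ≤ I :=
    lintegral_mono_set (Ioo_subset_Ioo le_rfl (by linarith))
  refine le_trans step (le_trans (mul_le_mul_right step2 _) (le_of_eq ?_))
  rw [hK, ENNReal.mul_rpow_of_nonneg _ _ hp1,
    ENNReal.ofReal_rpow_of_pos (by positivity),
    ← Real.rpow_mul (by norm_num : (0:ℝ) ≤ 2), mul_assoc]
  congr 1
  nth_rewrite 2 [← ENNReal.rpow_one I]
  rw [← ENNReal.rpow_add_of_nonneg _ _ hp1 zero_le_one]
  norm_num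
end

section
/- Let k ≥ 1 be an integer and α > 0. There exists a constant C = C(α) such that for every finite positive Borel measure ν on ℝ^k, every R > 0, every x′ ∈ ℝ^k and every 0 < x₁ < R, one has ∫_{B^k(x′,2R)} ( x₁ + |x′−y′| )^{−α} dν(y′) ≤ C ∫_{x₁}^{4R} ν(B^k(x′,r)) r^{−α−1} dr. -/
open MeasureTheory Metric Set

lemma aux_int (α : ℝ) (hα : 0 < α) (m b : ℝ) (hm : 0 < m) (hmb : m < b) :
    ∫⁻ r in Ioo m b, ENNReal.ofReal (r ^ (-α - 1)) =
      ENNReal.ofReal ((m ^ (-α) - b ^ (-α)) / α) := by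
  have h0 : (0:ℝ) ∉ Set.uIcc m b := by
    rw [Set.uIcc_of_le hmb.le]
    intro h; exact absurd h.1 (by linarith)
  have hint : IntegrableOn (fun r : ℝ => r ^ (-α - 1)) (Ioo m b) := by
    have := (intervalIntegral.intervalIntegrable_rpow (μ := volume) (r := -α - 1) (Or.inr h0))
    exact ((intervalIntegrable_iff_integrableOn_Ioc_of_le hmb.le).1 this).mono_set
      Ioo_subset_Ioc_self
  rw [← MeasureTheory.ofReal_integral_eq_lintegral_ofReal hint
    ((ae_restrict_iff' measurableSet_Ioo).2 (ae_of_all _ fun r hr =>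
      Real.rpow_nonneg (le_of_lt (hm.trans hr.1)) _))]
  congr 1
  have heq : ∫ r in Ioo m b, r ^ (-α - 1) = ∫ r in m..b, r ^ (-α - 1) := by
    rw [intervalIntegral.integral_of_le hmb.le, MeasureTheory.integral_Ioc_eq_integral_Ioo]
  rw [heq, integral_rpow (Or.inr ⟨by intro h; nlinarith, h0⟩)]
  have hne : -α - 1 + 1 = -α := by ring
  rw [hne, show -α = -(α) from rfl, div_neg, ← neg_div, neg_sub]

lemma aux_real (α : ℝ) (hα : 0 < α) (R x₁ d : ℝ) (hR : 0 < R) (hx₁ : 0 < x₁)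
    (hx₁R : x₁ < R) (hd : 0 ≤ d) (hd2 : d < 2 * R) :
    (x₁ + d) ^ (-α) ≤ (α / (1 - (3/4:ℝ) ^ α)) * ((max d x₁ ^ (-α) - (4*R) ^ (-α)) / α) := by
  set t := x₁ + d with ht
  have ht0 : 0 < t := by positivity
  have ht3 : t < 3 * R := by simp only [ht]; linarith
  have hq : (0:ℝ) < 1 - (3/4:ℝ) ^ α := by
    have : (3/4:ℝ) ^ α < 1 := Real.rpow_lt_one (by norm_num) (by norm_num) hα
    linarith
  have hm : max d x₁ ≤ t := max_le (by linarith) (by linarith)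
  have h1 : t ^ (-α) ≤ max d x₁ ^ (-α) :=
    Real.rpow_le_rpow_of_nonpos (lt_max_of_lt_right hx₁) hm (by linarith)
  have h2 : (4*R) ^ (-α) ≤ (3/4:ℝ) ^ α * t ^ (-α) := by
    have he : (3/4:ℝ) ^ α * t ^ (-α) = ((4/3) * t) ^ (-α) := by
      rw [Real.mul_rpow (by norm_num) ht0.le, show (3/4:ℝ) = (4/3:ℝ)⁻¹ by norm_num,
        Real.inv_rpow (by norm_num), ← Real.rpow_neg (by norm_num)]
    rw [he]
    exact Real.rpow_le_rpow_of_nonpos (by positivity) (by linarith) (by linarith)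
  rw [div_mul_div_comm, mul_comm α, mul_div_mul_right _ _ (ne_of_gt hα)]
  rw [le_div_iff₀ hq]
  nlinarith [h1, h2]

theorem stmt_13 (α : ℝ) (hα : 0 < α) :
    ∃ C > 0, ∀ (k : ℕ), 1 ≤ k →
      ∀ ν : Measure (EuclideanSpace ℝ (Fin k)), IsFiniteMeasure ν →
      ∀ R : ℝ, 0 < R → ∀ x' : EuclideanSpace ℝ (Fin k), ∀ x₁ : ℝ, 0 < x₁ → x₁ < R →
        ∫⁻ y' in Metric.ball x' (2 * R),
            ENNReal.ofReal ((x₁ + dist x' y') ^ (-α)) ∂ν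
          ≤ ENNReal.ofReal C *
            ∫⁻ r in Ioo x₁ (4 * R),
              ν (Metric.ball x' r) * ENNReal.ofReal (r ^ (-α - 1)) := by
  have hq : (0:ℝ) < 1 - (3/4:ℝ) ^ α := by
    have : (3/4:ℝ) ^ α < 1 := Real.rpow_lt_one (by norm_num) (by norm_num) hα
    linarith
  set C := α / (1 - (3/4:ℝ) ^ α) with hC
  have hCpos : 0 < C := div_pos hα hq
  refine ⟨C, hCpos, ?_⟩
  intro k hk ν hν R hR x' x₁ hx₁ hx₁R
  set F : EuclideanSpace ℝ (Fin k) × ℝ → ENNReal :=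
    fun p => {q : EuclideanSpace ℝ (Fin k) × ℝ | dist x' q.1 < q.2}.indicator
      (fun q => ENNReal.ofReal (q.2 ^ (-α - 1))) p with hFdef
  have hFmeas : Measurable F := by
    apply Measurable.indicator
    · fun_prop
    · exact (isOpen_lt ((continuous_const.dist continuous_fst)) continuous_snd).measurableSet
  have hFeq : ∀ y r, F (y, r) =
      (Ioi (dist x' y)).indicator (fun r => ENNReal.ofReal (r ^ (-α - 1))) r := by
    intro y r
    simp [hFdef, Set.indicator_apply, mem_Ioi]
  -- pointwise estimate
  have key : ∀ y ∈ ball x' (2 * R),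
      ENNReal.ofReal ((x₁ + dist x' y) ^ (-α)) ≤
        ENNReal.ofReal C * ∫⁻ r in Ioo x₁ (4 * R), F (y, r) := by
    intro y hy
    have hd : 0 ≤ dist x' y := dist_nonneg
    have hd2 : dist x' y < 2 * R := by rw [mem_ball, dist_comm] at hy; exact hy
    have hset : Ioi (dist x' y) ∩ Ioo x₁ (4 * R) = Ioo (max (dist x' y) x₁) (4 * R) := by
      ext r
      simp only [mem_inter_iff, mem_Ioi, mem_Ioo, max_lt_iff]
      tauto
    have hIi : ∫⁻ r in Ioo x₁ (4 * R), F (y, r)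
        = ∫⁻ r in Ioo (max (dist x' y) x₁) (4 * R), ENNReal.ofReal (r ^ (-α - 1)) := by
      simp only [hFeq]
      rw [lintegral_indicator measurableSet_Ioi,
        Measure.restrict_restrict measurableSet_Ioi, hset]
    rw [hIi, aux_int α hα _ _ (lt_max_of_lt_right hx₁)
      (max_lt (by linarith) (by linarith)),
      ← ENNReal.ofReal_mul hCpos.le]
    exact ENNReal.ofReal_le_ofReal (aux_real α hα R x₁ (dist x' y) hR hx₁ hx₁R hd hd2)
  calc ∫⁻ y' in ball x' (2 * R), ENNReal.ofReal ((x₁ + dist x' y') ^ (-α)) ∂ν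
      ≤ ∫⁻ y in ball x' (2 * R), (ENNReal.ofReal C * ∫⁻ r in Ioo x₁ (4 * R), F (y, r)) ∂ν := by
        apply setLIntegral_mono' measurableSet_ball key
    _ = ENNReal.ofReal C * ∫⁻ y in ball x' (2 * R), (∫⁻ r in Ioo x₁ (4 * R), F (y, r)) ∂ν := by
        rw [lintegral_const_mul]
        exact Measurable.lintegral_prod_right (f := fun y r => F (y, r)) hFmeas
    _ = ENNReal.ofReal C * ∫⁻ r in Ioo x₁ (4 * R), ∫⁻ y in ball x' (2 * R), F (y, r) ∂ν := by
        congr 1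
        exact lintegral_lintegral_swap (f := fun y r => F (y, r)) hFmeas.aemeasurable
    _ ≤ ENNReal.ofReal C * ∫⁻ r in Ioo x₁ (4 * R),
          ν (Metric.ball x' r) * ENNReal.ofReal (r ^ (-α - 1)) := by
        gcongr with r
        have hset2 : {y : EuclideanSpace ℝ (Fin k) | dist x' y < r} = ball x' r := by
          ext y; simp [dist_comm]
        calc ∫⁻ y in ball x' (2 * R), F (y, r) ∂ν
            = ∫⁻ y in ball x' (2 * R),
                (ball x' r).indicator (fun _ => ENNReal.ofReal (r ^ (-α - 1))) y ∂ν := by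
              congr 1 with y
              simp [hFdef, Set.indicator_apply, ← hset2]
          _ = ENNReal.ofReal (r ^ (-α - 1)) * ν (ball x' r ∩ ball x' (2 * R)) := by
              rw [lintegral_indicator measurableSet_ball,
                Measure.restrict_restrict measurableSet_ball, setLIntegral_const]
          _ ≤ ν (Metric.ball x' r) * ENNReal.ofReal (r ^ (-α - 1)) := by
              rw [mul_comm]
              exact mul_le_mul_left (measure_mono inter_subset_left) _
end
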